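/- arXiv:2405.20769 — 6 statements merged into one kernel-verified Lean document; each statement's English description precedes it below -/
import Mathlib

section
/- Data-processing inequality for the hockey-stick divergence: for probability measures P and Q on a measurable space X, a Markov kernel κ from X to a measurable space Y, and every real α ≥ 0, the hockey-stick divergence satisfies H_α(κ∘P ‖ κ∘Q) ≤ H_α(P ‖ Q), where κ∘P denotes the composition of the kernel κ with the measure P (the law of κ(X) for X ∼ P). -/
open MeasureTheory ProbabilityTheory

/-- Hockey-stick divergence: `H_α(P ‖ Q) = sup_{E measurable} (P(E) − α·Q(E))`. -/
noncomputable def hsDiv {X : Type*} [MeasurableSpace X] (α : ℝ) (P Q : Measure X) : ℝ :=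
  ⨆ E : {E : Set X // MeasurableSet E}, ((P E).toReal - α * (Q E).toReal)

/-- Data-processing inequality for the hockey-stick divergence: for probability measures
`P`, `Q` on `X`, a Markov kernel `κ : X → Y`, and any `α ≥ 0`,
`H_α(κ∘P ‖ κ∘Q) ≤ H_α(P ‖ Q)`. -/
theorem hsDiv_dataProcessing {X Y : Type*} [MeasurableSpace X] [MeasurableSpace Y]
    (P Q : Measure X) [IsProbabilityMeasure P] [IsProbabilityMeasure Q]
    (κ : Kernel X Y) [IsMarkovKernel κ] (α : ℝ) (hα : 0 ≤ α) :
    hsDiv α (P.bind κ) (Q.bind κ) ≤ hsDiv α P Q := by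
  set h : ℝ := hsDiv α P Q with hh
  -- boundedness of the sup defining hsDiv α P Q
  have hbdd : BddAbove (Set.range fun E : {E : Set X // MeasurableSet E} =>
      ((P E).toReal - α * (Q E).toReal)) := by
    refine ⟨1, ?_⟩
    rintro x ⟨E, rfl⟩
    have h1 : (P (E : Set X)).toReal ≤ 1 := by
      simpa using ENNReal.toReal_mono ENNReal.one_ne_top (prob_le_one (μ := P))
    have h2 : 0 ≤ α * (Q (E : Set X)).toReal := by positivity
    simp only
    linarith
  have hkey : ∀ S : Set X, MeasurableSet S →
      P S ≤ ENNReal.ofReal α * Q S + ENNReal.ofReal h := by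
    intro S hS
    have hle : (P S).toReal - α * (Q S).toReal ≤ h :=
      le_ciSup hbdd ⟨S, hS⟩
    have : (P S).toReal ≤ α * (Q S).toReal + h := by linarith
    calc P S = ENNReal.ofReal ((P S).toReal) := by
          rw [ENNReal.ofReal_toReal (measure_ne_top _ _)]
      _ ≤ ENNReal.ofReal (α * (Q S).toReal + h) := ENNReal.ofReal_le_ofReal this
      _ ≤ ENNReal.ofReal (α * (Q S).toReal) + ENNReal.ofReal h := ENNReal.ofReal_add_le
      _ = ENNReal.ofReal α * Q S + ENNReal.ofReal h := by
          rw [ENNReal.ofReal_mul hα, ENNReal.ofReal_toReal (measure_ne_top _ _)]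
  have h0 : 0 ≤ h := by
    have : (P (∅ : Set X)).toReal - α * (Q (∅ : Set X)).toReal ≤ h :=
      le_ciSup hbdd ⟨∅, MeasurableSet.empty⟩
    simpa using this
  -- main pointwise bound for each measurable E in Y
  have hmain : ∀ E : {E : Set Y // MeasurableSet E},
      ((P.bind κ) E).toReal - α * ((Q.bind κ) E).toReal ≤ h := by
    rintro ⟨E, hE⟩
    set f : X → ℝ := fun x => (κ x E).toReal with hf
    have hf_mble : Measurable f := (κ.measurable_coe hE).ennreal_toReal
    have hf_nn : ∀ x, 0 ≤ f x := fun x => ENNReal.toReal_nonneg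
    have hof : ∀ x, ENNReal.ofReal (f x) = κ x E := fun x =>
      ENNReal.ofReal_toReal (measure_ne_top _ _)
    have hbind : ∀ μ : Measure X, μ.bind κ E = ∫⁻ t in Set.Ioi (0:ℝ), μ {a | t < f a} := by
      intro μ
      rw [Measure.bind_apply hE κ.measurable.aemeasurable]
      rw [← lintegral_congr fun x => hof x,
        lintegral_eq_lintegral_meas_lt μ (ae_of_all _ hf_nn) hf_mble.aemeasurable]
    -- bind of probability measure is finite on E
    have hfinb : ∀ μ : Measure X, IsProbabilityMeasure μ → μ.bind κ E ≤ 1 := by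
      intro μ hμ
      rw [Measure.bind_apply hE κ.measurable.aemeasurable]
      calc ∫⁻ x, κ x E ∂μ ≤ ∫⁻ _, 1 ∂μ := lintegral_mono fun x => prob_le_one
        _ = 1 := by simp
    -- restrict to Ioc 0 1
    have hsplit : ∀ μ : Measure X,
        ∫⁻ t in Set.Ioi (0:ℝ), μ {a | t < f a} = ∫⁻ t in Set.Ioc (0:ℝ) 1, μ {a | t < f a} := by
      intro μ
      rw [← Set.Ioc_union_Ioi_eq_Ioi (zero_le_one (α := ℝ)),
        lintegral_union measurableSet_Ioi Set.Ioc_disjoint_Ioi_same]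
      have : ∀ t ∈ Set.Ioi (1:ℝ), μ {a | t < f a} = 0 := by
        intro t ht
        have : {a | t < f a} = ∅ := by
          ext a
          simp only [Set.mem_setOf_eq, Set.mem_empty_iff_false, iff_false, not_lt]
          calc f a ≤ 1 := by
                simpa [hf] using ENNReal.toReal_mono ENNReal.one_ne_top (prob_le_one (μ := κ a))
            _ ≤ t := le_of_lt ht
        simp [this]
      rw [setLIntegral_congr_fun measurableSet_Ioi this]
      simp
    have hPb : P.bind κ E ≤ ENNReal.ofReal α * Q.bind κ E + ENNReal.ofReal h := by
      rw [hbind P, hbind Q, hsplit P]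
      calc ∫⁻ t in Set.Ioc (0:ℝ) 1, P {a | t < f a}
          ≤ ∫⁻ t in Set.Ioc (0:ℝ) 1,
              (ENNReal.ofReal α * Q {a | t < f a} + ENNReal.ofReal h) := by
            refine lintegral_mono fun t => hkey _ ?_
            exact measurableSet_lt measurable_const hf_mble
        _ = ENNReal.ofReal α * (∫⁻ t in Set.Ioc (0:ℝ) 1, Q {a | t < f a})
              + ENNReal.ofReal h * volume (Set.Ioc (0:ℝ) 1) := by
            rw [lintegral_add_right _ measurable_const,
              lintegral_const_mul' _ _ ENNReal.ofReal_ne_top, setLIntegral_const]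
        _ = ENNReal.ofReal α * (∫⁻ t in Set.Ioc (0:ℝ) 1, Q {a | t < f a})
              + ENNReal.ofReal h := by
            rw [Real.volume_Ioc]; norm_num
        _ ≤ ENNReal.ofReal α * (∫⁻ t in Set.Ioi (0:ℝ), Q {a | t < f a}) + ENNReal.ofReal h := by
            gcongr
            exact Set.Ioc_subset_Ioi_self
    -- back to reals
    have hQfin : Q.bind κ E ≠ ⊤ := ne_top_of_le_ne_top ENNReal.one_ne_top (hfinb Q inferInstance)
    have hPfin : P.bind κ E ≠ ⊤ := ne_top_of_le_ne_top ENNReal.one_ne_top (hfinb P inferInstance)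
    have hm1 : ENNReal.ofReal α * Q.bind κ E ≠ ⊤ := ENNReal.mul_ne_top ENNReal.ofReal_ne_top hQfin
    have hfin : ENNReal.ofReal α * Q.bind κ E + ENNReal.ofReal h ≠ ⊤ :=
      ENNReal.add_ne_top.mpr ⟨hm1, ENNReal.ofReal_ne_top⟩
    have := ENNReal.toReal_le_toReal hPfin hfin |>.mpr hPb
    rw [ENNReal.toReal_add hm1 ENNReal.ofReal_ne_top, ENNReal.toReal_mul,
      ENNReal.toReal_ofReal hα, ENNReal.toReal_ofReal h0] at this
    simp only
    linarith
  exact ciSup_le hmain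
end

section
/- Integral formulation of the hockey-stick divergence: let P and Q be probability measures on a measurable space with P absolutely continuous with respect to Q, and let α ≥ 0. Then sup over measurable sets E of (P(E) − α·Q(E)) equals ∫ max(dP/dQ(y) − α, 0) dQ(y), where dP/dQ is the Radon–Nikodym derivative; moreover the supremum is attained at the set E = {y : dP/dQ(y) > α}. -/
open MeasureTheory ProbabilityTheory

/-- Integral formulation of the hockey-stick divergence: if `P ≪ Q` are probability measures
and `α ≥ 0`, then `H_α(P ‖ Q) = ∫ max(dP/dQ(y) − α, 0) dQ(y)`, and the defining supremum is
attained at the event `E = {y : dP/dQ(y) > α}`. -/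
theorem hsDiv_eq_integral_max_rnDeriv {X : Type*} [MeasurableSpace X]
    (P Q : Measure X) [IsProbabilityMeasure P] [IsProbabilityMeasure Q]
    (hPQ : P ≪ Q) (α : ℝ) (hα : 0 ≤ α) :
    hsDiv α P Q = ∫ y, max ((P.rnDeriv Q y).toReal - α) 0 ∂Q ∧
    hsDiv α P Q = (P {y | α < (P.rnDeriv Q y).toReal}).toReal
      - α * (Q {y | α < (P.rnDeriv Q y).toReal}).toReal := by
  set f : X → ℝ := fun y => (P.rnDeriv Q y).toReal with hf
  have hfmeas : Measurable f := (P.measurable_rnDeriv Q).ennreal_toReal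
  have hfint : Integrable f Q := Measure.integrable_toReal_rnDeriv
  have hmaxint : Integrable (fun y => max (f y - α) 0) Q :=
    (hfint.sub (integrable_const α)).pos_part
  set E₀ : Set X := {y | α < f y} with hE₀
  have hE₀meas : MeasurableSet E₀ := measurableSet_lt measurable_const hfmeas
  -- value on a measurable set equals a set integral
  have hval : ∀ E : Set X, MeasurableSet E →
      (P E).toReal - α * (Q E).toReal = ∫ y in E, (f y - α) ∂Q := by
    intro E hE
    rw [integral_sub (hfint.restrict) (integrable_const α),
      Measure.setIntegral_toReal_rnDeriv hPQ, setIntegral_const, smul_eq_mul]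
    simp only [Measure.real_def]
    ring
  -- upper bound
  have hub : ∀ E : Set X, MeasurableSet E →
      (P E).toReal - α * (Q E).toReal ≤ ∫ y, max (f y - α) 0 ∂Q := by
    intro E hE
    rw [hval E hE]
    calc ∫ y in E, (f y - α) ∂Q ≤ ∫ y in E, max (f y - α) 0 ∂Q := by
          apply integral_mono_ae (hfint.restrict.sub (integrable_const α))
            hmaxint.restrict
          exact Filter.Eventually.of_forall fun y => le_max_left _ _
      _ ≤ ∫ y, max (f y - α) 0 ∂Q :=
          setIntegral_le_integral hmaxint
            (Filter.Eventually.of_forall fun y => le_max_right _ _)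
  -- attainment at E₀
  have hatt : (P E₀).toReal - α * (Q E₀).toReal = ∫ y, max (f y - α) 0 ∂Q := by
    rw [hval E₀ hE₀meas]
    rw [← integral_indicator hE₀meas]
    congr 1
    ext y
    by_cases h : y ∈ E₀
    · simp [Set.indicator_of_mem h, max_eq_left (sub_nonneg.mpr (le_of_lt (show α < f y from h)))]
    · have : f y ≤ α := not_lt.mp h
      simp [Set.indicator_of_notMem h, max_eq_right (sub_nonpos.mpr this)]
  have h1 : hsDiv α P Q = ∫ y, max (f y - α) 0 ∂Q := by
    unfold hsDiv
    apply le_antisymm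
    · exact ciSup_le fun E => hub E.1 E.2
    · rw [← hatt]
      exact le_ciSup ⟨∫ y, max (f y - α) 0 ∂Q, by
        rintro _ ⟨E, rfl⟩; exact hub E.1 E.2⟩ (⟨E₀, hE₀meas⟩ : {E : Set X // MeasurableSet E})
  exact ⟨h1, h1.trans hatt.symm⟩
end

section
/- Composition preserves domination (two factors): let P₁', Q₁' be probability measures on a measurable space X₁, P₂', Q₂' probability measures on X₂, and P₁, Q₁, P₂, Q₂ probability measures on Y₁, Y₂ respectively. If H_α(P₁' ‖ Q₁') ≤ H_α(P₁ ‖ Q₁) for all α ≥ 0 and H_α(P₂' ‖ Q₂') ≤ H_α(P₂ ‖ Q₂) for all α ≥ 0, then for all α ≥ 0, H_α(P₁' ⊗ P₂' ‖ Q₁' ⊗ Q₂') ≤ H_α(P₁ ⊗ P₂ ‖ Q₁ ⊗ Q₂), where ⊗ denotes the product measure. -/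
open MeasureTheory ProbabilityTheory

set_option maxHeartbeats 1000000

namespace HSAux

open MeasureTheory Measure ENNReal

variable {X : Type*} [MeasurableSpace X]

/-- The hockey-stick divergence between `μ.withDensity f` and `μ.withDensity g` equals
`(∫⁻ (f - ofReal α * g) ∂μ).toReal`. -/
lemma hsDiv_withDensity (μ : Measure X) (f g : X → ℝ≥0∞)
    (hf : Measurable f) (hg : Measurable g)
    (hfi : ∫⁻ x, f x ∂μ ≠ ∞) (hgi : ∫⁻ x, g x ∂μ ≠ ∞)
    {α : ℝ} (hα : 0 ≤ α) :
    hsDiv α (μ.withDensity f) (μ.withDensity g)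
      = (∫⁻ x, f x - ENNReal.ofReal α * g x ∂μ).toReal := by
  set a := ENNReal.ofReal α with ha
  have haT : a ≠ ∞ := ENNReal.ofReal_ne_top
  set I := ∫⁻ x, f x - a * g x ∂μ with hI
  have hIne : I ≠ ∞ :=
    ((lintegral_mono fun x => tsub_le_self).trans_lt hfi.lt_top).ne
  -- upper bound for every measurable set
  have hub : ∀ E : {E : Set X // MeasurableSet E},
      ((μ.withDensity f) E).toReal - α * ((μ.withDensity g) E).toReal ≤ I.toReal := by
    rintro ⟨E, hE⟩
    have hPE : (μ.withDensity f) E = ∫⁻ x in E, f x ∂μ := withDensity_apply f hE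
    have hQE : (μ.withDensity g) E = ∫⁻ x in E, g x ∂μ := withDensity_apply g hE
    have hPEne : (μ.withDensity f) E ≠ ∞ := by
      rw [hPE]; exact ((setLIntegral_le_lintegral _ _).trans_lt hfi.lt_top).ne
    have hQEne : (μ.withDensity g) E ≠ ∞ := by
      rw [hQE]; exact ((setLIntegral_le_lintegral _ _).trans_lt hgi.lt_top).ne
    have key : (μ.withDensity f) E ≤ I + a * (μ.withDensity g) E := by
      rw [hPE, hQE]
      calc ∫⁻ x in E, f x ∂μ ≤ ∫⁻ x in E, (f x - a * g x) + a * g x ∂μ :=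
            lintegral_mono fun x => le_tsub_add
        _ = (∫⁻ x in E, f x - a * g x ∂μ) + ∫⁻ x in E, a * g x ∂μ :=
            lintegral_add_right _ (hg.const_mul a)
        _ ≤ I + a * ∫⁻ x in E, g x ∂μ := by
            gcongr
            · exact setLIntegral_le_lintegral _ _
            · rw [lintegral_const_mul a hg]
    have key' : ((μ.withDensity f) E).toReal ≤ I.toReal + α * ((μ.withDensity g) E).toReal := by
      have := ENNReal.toReal_mono (by
        exact ENNReal.add_ne_top.2 ⟨hIne, ENNReal.mul_ne_top haT hQEne⟩) key
      rwa [ENNReal.toReal_add hIne (ENNReal.mul_ne_top haT hQEne), ENNReal.toReal_mul,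
        ha, ENNReal.toReal_ofReal hα] at this
    linarith
  -- the supremum is attained at `E* = {x | a * g x < f x}`
  set E : Set X := {x | a * g x < f x} with hEdef
  have hE : MeasurableSet E := measurableSet_lt (hg.const_mul a) hf
  have hIeq : I = (μ.withDensity f) E - a * (μ.withDensity g) E := by
    have h1 : I = ∫⁻ x in E, f x - a * g x ∂μ := by
      rw [← lintegral_indicator hE]
      refine lintegral_congr fun x => ?_
      by_cases hx : x ∈ E
      · rw [Set.indicator_of_mem hx]
      · rw [Set.indicator_of_notMem hx]
        exact tsub_eq_zero_of_le (not_lt.1 hx)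
    have h2 : ∫⁻ x in E, f x - a * g x ∂μ
        = (∫⁻ x in E, f x ∂μ) - ∫⁻ x in E, a * g x ∂μ := by
      refine lintegral_sub (hg.const_mul a) ?_ ?_
      · exact ((setLIntegral_le_lintegral _ _).trans_lt
          (by rw [lintegral_const_mul a hg]; exact ENNReal.mul_lt_top haT.lt_top hgi.lt_top)).ne
      · exact (ae_restrict_iff' hE).2 (Filter.Eventually.of_forall fun x hx => (le_of_lt hx))
    rw [h1, h2, withDensity_apply f hE, withDensity_apply g hE, lintegral_const_mul a hg]
  have hQEne : (μ.withDensity g) E ≠ ∞ := by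
    rw [withDensity_apply g hE]
    exact ((setLIntegral_le_lintegral _ _).trans_lt hgi.lt_top).ne
  have hPEne : (μ.withDensity f) E ≠ ∞ := by
    rw [withDensity_apply f hE]
    exact ((setLIntegral_le_lintegral _ _).trans_lt hfi.lt_top).ne
  have hle : a * (μ.withDensity g) E ≤ (μ.withDensity f) E := by
    rw [withDensity_apply f hE, withDensity_apply g hE, ← lintegral_const_mul a hg]
    exact setLIntegral_mono_ae' hE (Filter.Eventually.of_forall fun x hx => le_of_lt hx)
  have hIval : I.toReal
      = ((μ.withDensity f) E).toReal - α * ((μ.withDensity g) E).toReal := by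
    rw [hIeq, ENNReal.toReal_sub_of_le hle hPEne, ENNReal.toReal_mul, ha,
      ENNReal.toReal_ofReal hα]
  refine le_antisymm (ciSup_le hub) ?_
  rw [hIval]
  exact le_ciSup (f := fun E : {E : Set X // MeasurableSet E} =>
      ((μ.withDensity f) (E : Set X)).toReal - α * ((μ.withDensity g) (E : Set X)).toReal)
    ⟨I.toReal, Set.forall_mem_range.2 hub⟩ (⟨E, hE⟩ : {E : Set X // MeasurableSet E})

lemma hsDiv_eq (P Q : Measure X) [IsFiniteMeasure P] [IsFiniteMeasure Q]
    {α : ℝ} (hα : 0 ≤ α) :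
    hsDiv α P Q = (∫⁻ x, P.rnDeriv (P + Q) x
      - ENNReal.ofReal α * Q.rnDeriv (P + Q) x ∂(P + Q)).toReal := by
  have hPac : P ≪ P + Q := Measure.absolutelyContinuous_of_le (Measure.le_add_right le_rfl)
  have hQac : Q ≪ P + Q := Measure.absolutelyContinuous_of_le (Measure.le_add_left le_rfl)
  have hfi : ∫⁻ x, P.rnDeriv (P + Q) x ∂(P + Q) ≠ ∞ :=
    (Measure.lintegral_rnDeriv_le.trans_lt (measure_lt_top _ _)).ne
  have hgi : ∫⁻ x, Q.rnDeriv (P + Q) x ∂(P + Q) ≠ ∞ :=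
    (Measure.lintegral_rnDeriv_le.trans_lt (measure_lt_top _ _)).ne
  have := hsDiv_withDensity (P + Q) _ _ (Measure.measurable_rnDeriv P (P + Q))
    (Measure.measurable_rnDeriv Q (P + Q)) hfi hgi hα
  rwa [Measure.withDensity_rnDeriv_eq P (P + Q) hPac,
    Measure.withDensity_rnDeriv_eq Q (P + Q) hQac] at this

/-- Product of `withDensity` measures. -/
lemma prod_withDensity {Z : Type*} [MeasurableSpace Z]
    (μ : Measure X) (ν : Measure Z) [SigmaFinite μ] [SigmaFinite ν]
    (f : X → ℝ≥0∞) (g : Z → ℝ≥0∞) (hf : Measurable f) (hg : Measurable g)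
    [SigmaFinite (μ.withDensity f)] [SigmaFinite (ν.withDensity g)] :
    (μ.withDensity f).prod (ν.withDensity g)
      = (μ.prod ν).withDensity (fun y => f y.1 * g y.2) :=
  Measure.prod_eq fun s t hs ht => by
    rw [withDensity_apply _ (hs.prod ht), ← Measure.prod_restrict,
      lintegral_prod_mul hf.aemeasurable hg.aemeasurable,
      withDensity_apply _ hs, withDensity_apply _ ht]

lemma prod_eq_withDensity {Z : Type*} [MeasurableSpace Z]
    (μ : Measure X) (ν : Measure Z) [SigmaFinite μ] [SigmaFinite ν]
    (P : Measure X) (R : Measure Z) [SigmaFinite P] [SigmaFinite R]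
    (hP : P ≪ μ) (hR : R ≪ ν) :
    P.prod R = (μ.prod ν).withDensity (fun y => P.rnDeriv μ y.1 * R.rnDeriv ν y.2) := by
  haveI : SigmaFinite (μ.withDensity (P.rnDeriv μ)) := by
    rw [Measure.withDensity_rnDeriv_eq P μ hP]; infer_instance
  haveI : SigmaFinite (ν.withDensity (R.rnDeriv ν)) := by
    rw [Measure.withDensity_rnDeriv_eq R ν hR]; infer_instance
  conv_lhs => rw [← Measure.withDensity_rnDeriv_eq P μ hP,
    ← Measure.withDensity_rnDeriv_eq R ν hR]
  exact prod_withDensity μ ν _ _ (Measure.measurable_rnDeriv _ _)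
    (Measure.measurable_rnDeriv _ _)

/-- Iterated-integral formula for the hockey-stick divergence of products. -/
lemma hsDiv_prod_eq {Z : Type*} [MeasurableSpace Z]
    (R S : Measure Z) (P Q : Measure X)
    [IsProbabilityMeasure R] [IsProbabilityMeasure S]
    [IsProbabilityMeasure P] [IsProbabilityMeasure Q]
    {α : ℝ} (hα : 0 ≤ α) :
    hsDiv α (R.prod P) (S.prod Q)
      = (∫⁻ x, ∫⁻ z, R.rnDeriv (R + S) x * P.rnDeriv (P + Q) z
          - ENNReal.ofReal α * (S.rnDeriv (R + S) x * Q.rnDeriv (P + Q) z)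
            ∂(P + Q) ∂(R + S)).toReal := by
  set μ0 := R + S
  set μ1 := P + Q
  have hRac : R ≪ μ0 := Measure.absolutelyContinuous_of_le (Measure.le_add_right le_rfl)
  have hSac : S ≪ μ0 := Measure.absolutelyContinuous_of_le (Measure.le_add_left le_rfl)
  have hPac : P ≪ μ1 := Measure.absolutelyContinuous_of_le (Measure.le_add_right le_rfl)
  have hQac : Q ≪ μ1 := Measure.absolutelyContinuous_of_le (Measure.le_add_left le_rfl)
  have hr : Measurable (R.rnDeriv μ0) := Measure.measurable_rnDeriv _ _
  have hs : Measurable (S.rnDeriv μ0) := Measure.measurable_rnDeriv _ _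
  have hp : Measurable (P.rnDeriv μ1) := Measure.measurable_rnDeriv _ _
  have hq : Measurable (Q.rnDeriv μ1) := Measure.measurable_rnDeriv _ _
  have hmf : Measurable (fun y : Z × X => R.rnDeriv μ0 y.1 * P.rnDeriv μ1 y.2) :=
    (hr.comp measurable_fst).mul (hp.comp measurable_snd)
  have hmg : Measurable (fun y : Z × X => S.rnDeriv μ0 y.1 * Q.rnDeriv μ1 y.2) :=
    (hs.comp measurable_fst).mul (hq.comp measurable_snd)
  have hfi : ∫⁻ y, R.rnDeriv μ0 y.1 * P.rnDeriv μ1 y.2 ∂(μ0.prod μ1) ≠ ∞ := by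
    rw [lintegral_prod_mul hr.aemeasurable hp.aemeasurable]
    exact ENNReal.mul_ne_top (Measure.lintegral_rnDeriv_le.trans_lt (measure_lt_top _ _)).ne
      (Measure.lintegral_rnDeriv_le.trans_lt (measure_lt_top _ _)).ne
  have hgi : ∫⁻ y, S.rnDeriv μ0 y.1 * Q.rnDeriv μ1 y.2 ∂(μ0.prod μ1) ≠ ∞ := by
    rw [lintegral_prod_mul hs.aemeasurable hq.aemeasurable]
    exact ENNReal.mul_ne_top (Measure.lintegral_rnDeriv_le.trans_lt (measure_lt_top _ _)).ne
      (Measure.lintegral_rnDeriv_le.trans_lt (measure_lt_top _ _)).ne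
  rw [prod_eq_withDensity μ0 μ1 R P hRac hPac, prod_eq_withDensity μ0 μ1 S Q hSac hQac,
    hsDiv_withDensity (μ0.prod μ1) _ _ hmf hmg hfi hgi hα]
  congr 1
  rw [lintegral_prod (fun y : Z × X => R.rnDeriv μ0 y.1 * P.rnDeriv μ1 y.2
      - ENNReal.ofReal α * (S.rnDeriv μ0 y.1 * Q.rnDeriv μ1 y.2))
      (hmf.sub (hmg.const_mul _)).aemeasurable]

lemma key_aux {W : Type*} [MeasurableSpace W] (m : Measure W) (u v : W → ℝ≥0∞)
    (hu : Measurable u) (hv : Measurable v) (c d : ℝ≥0∞) (hc0 : c ≠ 0) (hcT : c ≠ ∞) :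
    ∫⁻ z, c * u z - d * v z ∂m = c * ∫⁻ z, u z - (d / c) * v z ∂m := by
  rw [← lintegral_const_mul c (f := fun z => u z - d / c * v z) (hu.sub (hv.const_mul _))]
  refine lintegral_congr fun z => ?_
  rw [ENNReal.mul_sub (fun _ _ => hcT)]
  congr 1
  rw [← mul_assoc c, ENNReal.mul_div_cancel' (fun h => absurd h hc0) (fun h => absurd h hcT)]

/-- Key step: replacing the second factor by a dominating pair. -/
lemma hsDiv_prod_right_le {Z Y : Type*} [MeasurableSpace Z] [MeasurableSpace Y]
    (R S : Measure Z) (P' Q' : Measure X) (P Q : Measure Y)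
    [IsProbabilityMeasure R] [IsProbabilityMeasure S]
    [IsProbabilityMeasure P'] [IsProbabilityMeasure Q']
    [IsProbabilityMeasure P] [IsProbabilityMeasure Q]
    (h : ∀ β : ℝ, 0 ≤ β → hsDiv β P' Q' ≤ hsDiv β P Q)
    {α : ℝ} (hα : 0 ≤ α) :
    hsDiv α (R.prod P') (S.prod Q') ≤ hsDiv α (R.prod P) (S.prod Q) := by
  have hr : Measurable (R.rnDeriv (R + S)) := Measure.measurable_rnDeriv _ _
  have hsm : Measurable (S.rnDeriv (R + S)) := Measure.measurable_rnDeriv _ _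
  have hp' : Measurable (P'.rnDeriv (P' + Q')) := Measure.measurable_rnDeriv _ _
  have hq' : Measurable (Q'.rnDeriv (P' + Q')) := Measure.measurable_rnDeriv _ _
  have hp : Measurable (P.rnDeriv (P + Q)) := Measure.measurable_rnDeriv _ _
  have hq : Measurable (Q.rnDeriv (P + Q)) := Measure.measurable_rnDeriv _ _
  -- domination hypothesis in lintegral form
  have hK : ∀ b : ℝ≥0∞, b ≠ ∞ →
      ∫⁻ z, P'.rnDeriv (P' + Q') z - b * Q'.rnDeriv (P' + Q') z ∂(P' + Q')
        ≤ ∫⁻ z, P.rnDeriv (P + Q) z - b * Q.rnDeriv (P + Q) z ∂(P + Q) := by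
    intro b hb
    have hβ : (0:ℝ) ≤ b.toReal := ENNReal.toReal_nonneg
    have h1 := h b.toReal hβ
    rw [hsDiv_eq P' Q' hβ, hsDiv_eq P Q hβ, ENNReal.ofReal_toReal hb] at h1
    have hne : ∫⁻ z, P.rnDeriv (P + Q) z - b * Q.rnDeriv (P + Q) z ∂(P + Q) ≠ ∞ :=
      ((lintegral_mono fun x => tsub_le_self).trans_lt
        (Measure.lintegral_rnDeriv_le.trans_lt (measure_lt_top _ _))).ne
    have hne' : ∫⁻ z, P'.rnDeriv (P' + Q') z - b * Q'.rnDeriv (P' + Q') z ∂(P' + Q') ≠ ∞ :=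
      ((lintegral_mono fun x => tsub_le_self).trans_lt
        (Measure.lintegral_rnDeriv_le.trans_lt (measure_lt_top _ _))).ne
    exact (ENNReal.toReal_le_toReal hne' hne).1 h1
  rw [hsDiv_prod_eq R S P' Q' hα, hsDiv_prod_eq R S P Q hα]
  have hRHSne : ∫⁻ x, ∫⁻ z, R.rnDeriv (R + S) x * P.rnDeriv (P + Q) z
      - ENNReal.ofReal α * (S.rnDeriv (R + S) x * Q.rnDeriv (P + Q) z)
        ∂(P + Q) ∂(R + S) ≠ ∞ := by
    have hmf : Measurable (fun y : Z × Y => R.rnDeriv (R + S) y.1 * P.rnDeriv (P + Q) y.2) :=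
      (hr.comp measurable_fst).mul (hp.comp measurable_snd)
    have hmg : Measurable (fun y : Z × Y => S.rnDeriv (R + S) y.1 * Q.rnDeriv (P + Q) y.2) :=
      (hsm.comp measurable_fst).mul (hq.comp measurable_snd)
    rw [← lintegral_prod (fun y : Z × Y => R.rnDeriv (R + S) y.1 * P.rnDeriv (P + Q) y.2
      - ENNReal.ofReal α * (S.rnDeriv (R + S) y.1 * Q.rnDeriv (P + Q) y.2))
      (hmf.sub (hmg.const_mul _)).aemeasurable]
    refine ((lintegral_mono fun y => tsub_le_self).trans_lt ?_).ne
    rw [lintegral_prod_mul hr.aemeasurable hp.aemeasurable]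
    exact ENNReal.mul_lt_top (Measure.lintegral_rnDeriv_le.trans_lt (measure_lt_top _ _))
      (Measure.lintegral_rnDeriv_le.trans_lt (measure_lt_top _ _))
  refine ENNReal.toReal_mono hRHSne (lintegral_mono_ae ?_)
  filter_upwards [Measure.rnDeriv_lt_top R (R + S), Measure.rnDeriv_lt_top S (R + S)]
    with x hrx hsx
  by_cases h0 : R.rnDeriv (R + S) x = 0
  · simp only [h0, zero_mul, zero_tsub, lintegral_zero, le_refl]
  · have e1 := key_aux (P' + Q') (P'.rnDeriv (P' + Q')) (Q'.rnDeriv (P' + Q')) hp' hq'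
      (R.rnDeriv (R + S) x) (ENNReal.ofReal α * S.rnDeriv (R + S) x) h0 hrx.ne
    have e2 := key_aux (P + Q) (P.rnDeriv (P + Q)) (Q.rnDeriv (P + Q)) hp hq
      (R.rnDeriv (R + S) x) (ENNReal.ofReal α * S.rnDeriv (R + S) x) h0 hrx.ne
    simp only [← mul_assoc]
    rw [e1, e2]
    refine mul_le_mul_right (hK _ ?_) _
    exact (ENNReal.div_lt_top (ENNReal.mul_ne_top ENNReal.ofReal_ne_top hsx.ne) h0).ne

/-- The hockey-stick divergence of a product is symmetric in the factors. -/
lemma hsDiv_prod_comm {Z : Type*} [MeasurableSpace Z]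
    (R S : Measure Z) (P Q : Measure X)
    [IsProbabilityMeasure R] [IsProbabilityMeasure S]
    [IsProbabilityMeasure P] [IsProbabilityMeasure Q]
    {α : ℝ} (hα : 0 ≤ α) :
    hsDiv α (R.prod P) (S.prod Q) = hsDiv α (P.prod R) (Q.prod S) := by
  rw [hsDiv_prod_eq R S P Q hα, hsDiv_prod_eq P Q R S hα]
  congr 1
  have hr : Measurable (R.rnDeriv (R + S)) := Measure.measurable_rnDeriv _ _
  have hsm : Measurable (S.rnDeriv (R + S)) := Measure.measurable_rnDeriv _ _
  have hp : Measurable (P.rnDeriv (P + Q)) := Measure.measurable_rnDeriv _ _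
  have hq : Measurable (Q.rnDeriv (P + Q)) := Measure.measurable_rnDeriv _ _
  rw [lintegral_lintegral_swap]
  · refine lintegral_congr fun z => lintegral_congr fun x => by ring_nf
  · exact (((hr.comp measurable_fst).mul (hp.comp measurable_snd)).sub
      (((hsm.comp measurable_fst).mul (hq.comp measurable_snd)).const_mul _)).aemeasurable

end HSAux

/-- Composition preserves domination (two factors): if `(P₁, Q₁)` dominates `(P₁', Q₁')`
and `(P₂, Q₂)` dominates `(P₂', Q₂')` in hockey-stick divergence for all `α ≥ 0`, then
the product pair `(P₁ ⊗ P₂, Q₁ ⊗ Q₂)` dominates `(P₁' ⊗ P₂', Q₁' ⊗ Q₂')` for all `α ≥ 0`. -/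
theorem hsDiv_prod_le_of_domination
    {X₁ X₂ Y₁ Y₂ : Type*} [MeasurableSpace X₁] [MeasurableSpace X₂]
    [MeasurableSpace Y₁] [MeasurableSpace Y₂]
    (P₁' Q₁' : Measure X₁) [IsProbabilityMeasure P₁'] [IsProbabilityMeasure Q₁']
    (P₂' Q₂' : Measure X₂) [IsProbabilityMeasure P₂'] [IsProbabilityMeasure Q₂']
    (P₁ Q₁ : Measure Y₁) [IsProbabilityMeasure P₁] [IsProbabilityMeasure Q₁]
    (P₂ Q₂ : Measure Y₂) [IsProbabilityMeasure P₂] [IsProbabilityMeasure Q₂]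
    (h₁ : ∀ α : ℝ, 0 ≤ α → hsDiv α P₁' Q₁' ≤ hsDiv α P₁ Q₁)
    (h₂ : ∀ α : ℝ, 0 ≤ α → hsDiv α P₂' Q₂' ≤ hsDiv α P₂ Q₂) :
    ∀ α : ℝ, 0 ≤ α →
      hsDiv α (P₁'.prod P₂') (Q₁'.prod Q₂') ≤ hsDiv α (P₁.prod P₂) (Q₁.prod Q₂) := by
  intro α hα
  calc hsDiv α (P₁'.prod P₂') (Q₁'.prod Q₂')
      ≤ hsDiv α (P₁'.prod P₂) (Q₁'.prod Q₂) :=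
        HSAux.hsDiv_prod_right_le P₁' Q₁' P₂' Q₂' P₂ Q₂ h₂ hα
    _ = hsDiv α (P₂.prod P₁') (Q₂.prod Q₁') := HSAux.hsDiv_prod_comm _ _ _ _ hα
    _ ≤ hsDiv α (P₂.prod P₁) (Q₂.prod Q₁) :=
        HSAux.hsDiv_prod_right_le P₂ Q₂ P₁' Q₁' P₁ Q₁ h₁ hα
    _ = hsDiv α (P₁.prod P₂) (Q₁.prod Q₂) := HSAux.hsDiv_prod_comm _ _ _ _ hα
end

section
/- Dominating pair of datasets for the Poisson-subsampled Gaussian mechanism under the remove relation: let σ > 0 and γ ∈ [0,1]. For every pair of finite tuples D, D' with all entries in [−1,1] such that D' is obtained from D by deleting one entry, and every α ≥ 0, H_α(Mγ(D) ‖ Mγ(D')) ≤ H_α((1−γ)·N(0,σ²) + γ·N(1,σ²) ‖ N(0,σ²)). Moreover this bound is realized by D = (0,…,0,1) and D' = (0,…,0). -/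
open MeasureTheory ProbabilityTheory

/-- The Poisson-subsampled Gaussian mechanism:
`Mγ(x) = ∑_{S ⊆ [m]} γ^{|S|} (1−γ)^{m−|S|} · N(∑_{i∈S} x_i, σ²)`. -/
noncomputable def poissonGauss (σ γ : ℝ) {m : ℕ} (x : Fin m → ℝ) : Measure ℝ :=
  ∑ S : Finset (Fin m),
    ENNReal.ofReal (γ ^ S.card * (1 - γ) ^ (m - S.card)) •
      gaussianReal (∑ i ∈ S, x i) ⟨σ ^ 2, sq_nonneg σ⟩


open Real Set
open scoped NNReal ENNReal

section Aux

variable {γ σ : ℝ}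

-- pointwise product-of-pdf identity
lemma gaussPDF_mul (a b t : ℝ) (v1 v2 : ℝ≥0) (h1 : v1 ≠ 0) (h2 : v2 ≠ 0) (s : ℝ) :
    gaussianPDFReal a v1 s * gaussianPDFReal (s + b) v2 t =
      gaussianPDFReal (a + b) (v1 + v2) t *
        gaussianPDFReal ((a * v2 + (t - b) * v1) / (v1 + v2)) (v1 * v2 / (v1 + v2)) s := by
  have hv1 : (0:ℝ) < v1 := lt_of_le_of_ne v1.coe_nonneg (by exact_mod_cast (Ne.symm h1))
  have hv2 : (0:ℝ) < v2 := lt_of_le_of_ne v2.coe_nonneg (by exact_mod_cast (Ne.symm h2))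
  have hsum : (0:ℝ) < (v1:ℝ) + v2 := by linarith
  have hw : ((v1 * v2 / (v1 + v2) : ℝ≥0) : ℝ) = (v1:ℝ) * v2 / ((v1:ℝ) + v2) := by
    push_cast [NNReal.coe_div]
    ring
  simp only [gaussianPDFReal, NNReal.coe_add, hw]
  rw [mul_mul_mul_comm, mul_mul_mul_comm ((√(2 * π * ((v1:ℝ) + v2)))⁻¹)]
  congr 1
  · rw [← mul_inv, ← mul_inv, ← Real.sqrt_mul (by positivity), ← Real.sqrt_mul (by positivity)]
    congr 2
    field_simp
  · rw [← Real.exp_add, ← Real.exp_add]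
    congr 1
    field_simp
    ring

lemma gaussPDF_jointly_measurable (b : ℝ) (v2 : ℝ≥0) :
    Measurable (Function.uncurry fun s t : ℝ => gaussianPDF (s + b) v2 t) := by
  apply ENNReal.measurable_ofReal.comp
  have : Continuous (fun p : ℝ × ℝ => (√(2 * π * v2))⁻¹ * rexp (- (p.2 - (p.1 + b))^2 / (2 * v2))) := by
    fun_prop
  exact this.measurable

lemma gauss_conv (a b : ℝ) (v1 v2 : ℝ≥0) (h1 : v1 ≠ 0) (h2 : v2 ≠ 0) :
    Measure.map (fun p : ℝ × ℝ => p.1 + p.2) ((gaussianReal a v1).prod (gaussianReal b v2)) =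
      gaussianReal (a + b) (v1 + v2) := by
  have hsum : v1 + v2 ≠ 0 := by positivity
  have hw : v1 * v2 / (v1 + v2) ≠ 0 := by positivity
  ext E hE
  rw [Measure.map_apply (by fun_prop) hE, Measure.prod_apply (hE.preimage (by fun_prop))]
  have h1' : ∀ s : ℝ, gaussianReal b v2 (Prod.mk s ⁻¹' ((fun p : ℝ × ℝ => p.1 + p.2) ⁻¹' E))
      = ∫⁻ t in E, gaussianPDF (s + b) v2 t := by
    intro s
    have hpre : Prod.mk s ⁻¹' ((fun p : ℝ × ℝ => p.1 + p.2) ⁻¹' E) = (fun t => s + t) ⁻¹' E := rfl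
    rw [hpre, ← Measure.map_apply (by fun_prop) hE, gaussianReal_map_const_add,
      gaussianReal_apply _ h2, add_comm b s]
  simp_rw [h1']
  rw [gaussianReal_of_var_ne_zero _ h1,
    lintegral_withDensity_eq_lintegral_mul _ (measurable_gaussianPDF _ _)
      (Measurable.lintegral_prod_right (gaussPDF_jointly_measurable b v2))]
  have hpull : ∀ s : ℝ, gaussianPDF a v1 s * ∫⁻ t in E, gaussianPDF (s + b) v2 t
      = ∫⁻ t in E, gaussianPDF a v1 s * gaussianPDF (s + b) v2 t := fun s =>
    (lintegral_const_mul _ ((gaussPDF_jointly_measurable b v2).comp measurable_prodMk_left)).symm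
  simp only [Pi.mul_apply]
  calc ∫⁻ s, gaussianPDF a v1 s * ∫⁻ t in E, gaussianPDF (s + b) v2 t
      = ∫⁻ s, ∫⁻ t in E, gaussianPDF a v1 s * gaussianPDF (s + b) v2 t := by
        simp_rw [hpull]
    _ = ∫⁻ t in E, ∫⁻ s, gaussianPDF a v1 s * gaussianPDF (s + b) v2 t := by
        apply lintegral_lintegral_swap
        apply Measurable.aemeasurable
        exact ((measurable_gaussianPDF a v1).comp measurable_fst).mul
          (gaussPDF_jointly_measurable b v2)
    _ = ∫⁻ t in E, gaussianPDF (a + b) (v1 + v2) t := by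
        apply lintegral_congr
        intro t
        have key : ∀ s : ℝ, gaussianPDF a v1 s * gaussianPDF (s + b) v2 t
            = gaussianPDF (a + b) (v1 + v2) t *
              gaussianPDF ((a * v2 + (t - b) * v1) / (v1 + v2)) (v1 * v2 / (v1 + v2)) s := by
          intro s
          simp only [gaussianPDF]
          rw [← ENNReal.ofReal_mul (gaussianPDFReal_nonneg _ _ _),
            ← ENNReal.ofReal_mul (gaussianPDFReal_nonneg _ _ _),
            gaussPDF_mul a b t v1 v2 h1 h2 s]
        simp_rw [key]
        rw [lintegral_const_mul _ (measurable_gaussianPDF _ _),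
          lintegral_gaussianPDF_eq_one _ hw, mul_one]
    _ = gaussianReal (a + b) (v1 + v2) E := (gaussianReal_apply _ hsum E).symm

variable {X : Type*} [MeasurableSpace X]

lemma hsDiv_bddAbove (α : ℝ) (hα : 0 ≤ α) (P Q : Measure X) [IsFiniteMeasure P] :
    BddAbove (Set.range fun E : {E : Set X // MeasurableSet E} =>
      ((P E).toReal - α * (Q E).toReal)) := by
  refine ⟨(P Set.univ).toReal, ?_⟩
  rintro x ⟨E, rfl⟩
  have h1 : (P E).toReal ≤ (P Set.univ).toReal :=
    ENNReal.toReal_mono (measure_ne_top _ _) (measure_mono (Set.subset_univ _))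
  have h2 : 0 ≤ α * (Q E).toReal := by positivity
  simp only
  linarith

lemma le_hsDiv (α : ℝ) (hα : 0 ≤ α) (P Q : Measure X) [IsFiniteMeasure P] (E : Set X)
    (hE : MeasurableSet E) : (P E).toReal - α * (Q E).toReal ≤ hsDiv α P Q :=
  le_ciSup (hsDiv_bddAbove α hα P Q) (⟨E, hE⟩ : {E : Set X // MeasurableSet E})

lemma hsDiv_le (α : ℝ) {P Q : Measure X} {B : ℝ}
    (h : ∀ E : Set X, MeasurableSet E → (P E).toReal - α * (Q E).toReal ≤ B) :
    hsDiv α P Q ≤ B :=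
  ciSup_le fun E => h E.1 E.2

lemma hsDiv_nonneg (α : ℝ) (hα : 0 ≤ α) (P Q : Measure X) [IsFiniteMeasure P] :
    0 ≤ hsDiv α P Q := by
  have := le_hsDiv α hα P Q ∅ MeasurableSet.empty
  simpa using this

lemma hsDiv_map_equiv (α : ℝ) (hα : 0 ≤ α) (P Q : Measure X) [IsFiniteMeasure P]
    (f : X ≃ᵐ X) : hsDiv α (P.map f) (Q.map f) = hsDiv α P Q := by
  have hmap : ∀ (μ : Measure X) (E : Set X) (hE : MeasurableSet E),
      (μ.map f) E = μ (f ⁻¹' E) := fun μ E hE => Measure.map_apply f.measurable hE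
  have : IsFiniteMeasure (P.map f) := by
    constructor
    rw [hmap P _ MeasurableSet.univ]
    simp [measure_lt_top]
  apply le_antisymm
  · apply hsDiv_le
    intro E hE
    rw [hmap P E hE, hmap Q E hE]
    exact le_hsDiv α hα P Q _ (f.measurable hE)
  · apply hsDiv_le
    intro E hE
    have h1 : (P.map f) (f.symm ⁻¹' E) = P E := by
      rw [hmap P _ (f.symm.measurable hE)]
      congr 1
      ext x
      simp
    have h2 : (Q.map f) (f.symm ⁻¹' E) = Q E := by
      rw [hmap Q _ (f.symm.measurable hE)]
      congr 1
      ext x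
      simp
    rw [← h1, ← h2]
    exact le_hsDiv α hα _ _ _ (f.symm.measurable hE)


lemma lintegral_sub_le_hsDiv (P Q : Measure X) [IsProbabilityMeasure P] [IsProbabilityMeasure Q]
    (α : ℝ) (hα : 0 ≤ α) (g : X → ℝ≥0∞) (hg : Measurable g) (hg1 : ∀ a, g a ≤ 1) :
    (∫⁻ a, g a ∂P).toReal - α * (∫⁻ a, g a ∂Q).toReal ≤ hsDiv α P Q := by
  set f : X → ℝ := fun a => (g a).toReal with hf
  have hgt : ∀ a, g a ≠ ⊤ := fun a => ((hg1 a).trans_lt ENNReal.one_lt_top).ne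
  have hfg : ∀ a, g a = ENNReal.ofReal (f a) := fun a => (ENNReal.ofReal_toReal (hgt a)).symm
  have hfm : Measurable f := hg.ennreal_toReal
  have hf1 : ∀ a, f a ≤ 1 := fun a => by
    rw [show (1:ℝ) = (1:ℝ≥0∞).toReal by simp]
    exact ENNReal.toReal_mono ENNReal.one_ne_top (hg1 a)
  have hEmeas : ∀ t : ℝ, MeasurableSet {a | t < f a} := fun t =>
    measurableSet_lt measurable_const hfm
  -- layer cake
  have layer : ∀ μ : Measure X, ∫⁻ a, g a ∂μ = ∫⁻ t in Ioo (0:ℝ) 1, μ {a | t < f a} := by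
    intro μ
    have h0 : ∫⁻ a, g a ∂μ = ∫⁻ a, ENNReal.ofReal (f a) ∂μ := by
      apply lintegral_congr
      exact hfg
    rw [h0, lintegral_eq_lintegral_meas_lt μ (ae_of_all _ fun a => ENNReal.toReal_nonneg)
      hfm.aemeasurable]
    rw [show Ioi (0:ℝ) = Ioo 0 1 ∪ Ici 1 from (Ioo_union_Ici_eq_Ioi one_pos).symm,
      lintegral_union measurableSet_Ici (Set.disjoint_left.mpr fun a ha hb => absurd hb (not_le.mpr ha.2))]
    have : ∫⁻ t in Ici (1:ℝ), μ {a | t < f a} = ∫⁻ _ in Ici (1:ℝ), 0 := by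
      apply setLIntegral_congr_fun measurableSet_Ici
      intro t ht
      have : {a | t < f a} = ∅ := by
        ext a
        simp only [mem_setOf_eq, mem_empty_iff_false, iff_false, not_lt]
        exact (hf1 a).trans ht
      simp [this]
    rw [this]
    simp
    rfl
  set B := hsDiv α P Q with hB
  have hB0 : 0 ≤ B := hsDiv_nonneg α hα P Q
  -- toReal of layer-cake integrals as Bochner integrals
  have meas_anti : ∀ μ : Measure X, Antitone (fun t : ℝ => μ {a | t < f a}) := by
    intro μ t₁ t₂ h12
    exact measure_mono fun a (ha : t₂ < f a) => lt_of_le_of_lt h12 ha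
  have conv : ∀ μ : Measure X, IsProbabilityMeasure μ →
      (∫⁻ t in Ioo (0:ℝ) 1, μ {a | t < f a}).toReal
        = ∫ t in Ioo (0:ℝ) 1, (μ {a | t < f a}).toReal := by
    intro μ hμ
    rw [integral_toReal]
    · exact ((meas_anti μ).measurable).aemeasurable
    · exact ae_of_all _ fun t => prob_le_one.trans_lt ENNReal.one_lt_top
  rw [layer P, layer Q, conv P inferInstance, conv Q inferInstance]
  -- pointwise bound and integration
  have hpt : ∀ t : ℝ, (P {a | t < f a}).toReal ≤ B + α * (Q {a | t < f a}).toReal := fun t => by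
    have := le_hsDiv α hα P Q _ (hEmeas t)
    linarith
  have hint : ∀ (μ : Measure X), IsProbabilityMeasure μ →
      Integrable (fun t => (μ {a | t < f a}).toReal) (volume.restrict (Ioo (0:ℝ) 1)) := by
    intro μ hμ
    have hmono : Antitone (fun t : ℝ => (μ {a | t < f a}).toReal) := fun t₁ t₂ h =>
      ENNReal.toReal_mono (measure_ne_top _ _) (meas_anti μ h)
    refine Integrable.mono' (integrable_const (1:ℝ)) hmono.measurable.aestronglyMeasurable ?_
    apply ae_of_all
    intro t
    rw [Real.norm_eq_abs, abs_of_nonneg ENNReal.toReal_nonneg]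
    exact ENNReal.toReal_le_of_le_ofReal one_pos.le (by simpa using prob_le_one)
  have key : ∫ t in Ioo (0:ℝ) 1, (P {a | t < f a}).toReal
      ≤ ∫ t in Ioo (0:ℝ) 1, (B + α * (Q {a | t < f a}).toReal) := by
    apply integral_mono (hint P inferInstance)
    · exact (integrable_const B).add ((hint Q inferInstance).const_mul α)
    · exact fun t => hpt t
  rw [integral_add (integrable_const B) ((hint Q inferInstance).const_mul α),
    integral_const, integral_const_mul] at key
  simp only [MeasurableSet.univ, Measure.restrict_apply, univ_inter, Real.volume_Ioo,
    measureReal_restrict_apply_univ, Real.volume_real_Ioo, max_eq_left, zero_le_one,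
    sub_zero, ENNReal.toReal_ofReal zero_le_one, smul_eq_mul, one_mul] at key
  linarith


noncomputable def mixG (γ c : ℝ) (v : ℝ≥0) : Measure ℝ :=
  ENNReal.ofReal (1 - γ) • gaussianReal 0 v + ENNReal.ofReal γ • gaussianReal c v



lemma mixG_prob (hγ0 : 0 ≤ γ) (hγ1 : γ ≤ 1) (c : ℝ) (v : ℝ≥0) :
    IsProbabilityMeasure (mixG γ c v) := by
  constructor
  simp only [mixG, Measure.add_apply, Measure.smul_apply, smul_eq_mul, measure_univ, mul_one]
  rw [← ENNReal.ofReal_add (by linarith) hγ0]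
  norm_num

lemma mixG_apply (γ c : ℝ) (v : ℝ≥0) (E : Set ℝ) :
    mixG γ c v E = ENNReal.ofReal (1 - γ) * gaussianReal 0 v E
      + ENNReal.ofReal γ * gaussianReal c v E := by
  simp [mixG]

/-- monotonicity of hockey-stick in the shift -/
lemma hsDiv_mixG_mono (hσ : 0 < σ) (hγ0 : 0 ≤ γ) (hγ1 : γ ≤ 1) (x : ℝ)
    (hx : x ∈ Set.Icc (-1 : ℝ) 1) (α : ℝ) (hα : 0 ≤ α) :
    hsDiv α (mixG γ x ⟨σ ^ 2, sq_nonneg σ⟩) (gaussianReal 0 ⟨σ ^ 2, sq_nonneg σ⟩) ≤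
      hsDiv α (mixG γ 1 ⟨σ ^ 2, sq_nonneg σ⟩) (gaussianReal 0 ⟨σ ^ 2, sq_nonneg σ⟩) := by
  set v : ℝ≥0 := ⟨σ ^ 2, sq_nonneg σ⟩ with hv
  have hv0 : v ≠ 0 := by
    intro h
    have := congrArg (NNReal.toReal) h
    simp [hv] at this
    change σ ^ 2 = 0 at this
    nlinarith
  have : IsProbabilityMeasure (mixG γ 1 v) := mixG_prob hγ0 hγ1 1 v
  have : IsProbabilityMeasure (mixG γ x v) := mixG_prob hγ0 hγ1 x v
  have hx2le : x ^ 2 ≤ 1 := by nlinarith [hx.1, hx.2]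
  rcases eq_or_lt_of_le hx2le with hx2 | hx2
  · -- |x| = 1 : either x = 1 (trivial) or x = -1 (reflection)
    have hone : x = 1 ∨ x = -1 := by
      have hfac : (x - 1) * (x + 1) = 0 := by nlinarith
      rcases mul_eq_zero.mp hfac with h | h
      · left; linarith
      · right; linarith
    rcases hone with rfl | rfl
    · exact le_refl _
    · -- reflection by neg
      have hneg : ∀ c : ℝ, (gaussianReal c v).map (fun t : ℝ => -t) = gaussianReal (-c) v := by
        intro c
        have : (fun t : ℝ => -t) = (fun t : ℝ => (-1 : ℝ) * t) := by funext t; ring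
        rw [this, gaussianReal_map_const_mul]
        congr 1
        · ring
        · ext
          norm_num
      have key : mixG γ (-1) v = (mixG γ 1 v).map (MeasurableEquiv.neg ℝ) := by
        have hmeq : ⇑(MeasurableEquiv.neg ℝ) = (fun t : ℝ => -t) := rfl
        rw [mixG, mixG, Measure.map_add _ _ (MeasurableEquiv.neg ℝ).measurable,
          Measure.map_smul, Measure.map_smul, hmeq, hneg 0, hneg 1]
        norm_num
      have key2 : gaussianReal 0 v = (gaussianReal 0 v).map (MeasurableEquiv.neg ℝ) := by
        have hmeq : ⇑(MeasurableEquiv.neg ℝ) = (fun t : ℝ => -t) := rfl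
        rw [hmeq, hneg 0]
        norm_num
      rw [key, ← hsDiv_map_equiv α hα (mixG γ 1 v) (gaussianReal 0 v) (MeasurableEquiv.neg ℝ),
        ← key2]
  · -- x² < 1
    by_cases hx0 : x = 0
    · -- mixG γ 0 v = gaussianReal 0 v
      have hmix0 : mixG γ 0 v = gaussianReal 0 v := by
        rw [mixG, ← add_smul, ← ENNReal.ofReal_add (by linarith) hγ0]
        norm_num
      rw [hx0, hmix0]
      apply hsDiv_le
      intro E hE
      rcases le_or_gt α 1 with h1 | h1
      · have hle : (gaussianReal 0 v E).toReal - α * (gaussianReal 0 v E).toReal ≤ 1 - α := by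
          have h2 : (gaussianReal 0 v E).toReal ≤ 1 := by
            rw [show (1:ℝ) = (1:ℝ≥0∞).toReal by simp]
            exact ENNReal.toReal_mono ENNReal.one_ne_top prob_le_one
          nlinarith [ENNReal.toReal_nonneg (a := gaussianReal 0 v E)]
        refine hle.trans ?_
        have := le_hsDiv α hα (mixG γ 1 v) (gaussianReal 0 v) Set.univ MeasurableSet.univ
        simpa [measure_univ] using this
      · have hle : (gaussianReal 0 v E).toReal - α * (gaussianReal 0 v E).toReal ≤ 0 := by
          nlinarith [ENNReal.toReal_nonneg (a := gaussianReal 0 v E)]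
        exact hle.trans (hsDiv_nonneg α hα _ _)
    · -- the kernel / convolution argument
      have h1x2 : 0 < 1 - x ^ 2 := by linarith
      set v1 : ℝ≥0 := ⟨x ^ 2 * σ ^ 2, by positivity⟩ with hv1
      set v2 : ℝ≥0 := ⟨(1 - x ^ 2) * σ ^ 2, le_of_lt (by positivity)⟩ with hv2
      have hv1ne : v1 ≠ 0 := by
        intro h
        have := congrArg NNReal.toReal h
        simp only [hv1, NNReal.coe_mk, NNReal.coe_zero] at this
        have hxx : 0 < x ^ 2 := lt_of_le_of_ne (sq_nonneg x) (Ne.symm (pow_ne_zero 2 hx0))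
        change x ^ 2 * σ ^ 2 = 0 at this
        nlinarith [pow_pos hσ 2]
      have hv2ne : v2 ≠ 0 := by
        intro h
        have := congrArg NNReal.toReal h
        simp only [hv2, NNReal.coe_mk, NNReal.coe_zero] at this
        change (1 - x ^ 2) * σ ^ 2 = 0 at this
        nlinarith [pow_pos hσ 2]
      have hsum12 : v1 + v2 = v := by
        ext
        rw [NNReal.coe_add]
        show x ^ 2 * σ ^ 2 + (1 - x ^ 2) * σ ^ 2 = σ ^ 2
        ring
      have procA : ∀ c : ℝ,
          Measure.map (fun p : ℝ × ℝ => x * p.1 + p.2)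
            ((gaussianReal c v).prod (gaussianReal 0 v2)) = gaussianReal (x * c) v := by
        intro c
        have h1 : (gaussianReal c v).map (x * ·) = gaussianReal (x * c) v1 := by
          rw [gaussianReal_map_const_mul]
          congr 1
        have h2 : (gaussianReal (x * c) v1).prod (gaussianReal 0 v2)
            = Measure.map (Prod.map (x * ·) id) ((gaussianReal c v).prod (gaussianReal 0 v2)) := by
          have hmm := Measure.map_prod_map (f := (x * ·)) (g := id)
            (gaussianReal c v) (gaussianReal 0 v2) (measurable_id.const_mul x) measurable_id
          rwa [Measure.map_id, h1] at hmm
        have h3 : Measure.map (fun p : ℝ × ℝ => p.1 + p.2)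
              (Measure.map (Prod.map (x * ·) id) ((gaussianReal c v).prod (gaussianReal 0 v2)))
            = Measure.map (fun p : ℝ × ℝ => x * p.1 + p.2)
              ((gaussianReal c v).prod (gaussianReal 0 v2)) := by
          rw [Measure.map_map (by fun_prop) (by fun_prop)]
          rfl
        rw [← h3, ← h2, gauss_conv _ _ v1 v2 hv1ne hv2ne, add_zero, hsum12]
      apply hsDiv_le
      intro E hE
      set W := gaussianReal 0 v2 with hW
      set g : ℝ → ℝ≥0∞ :=
        fun a => W (Prod.mk a ⁻¹' ((fun p : ℝ × ℝ => x * p.1 + p.2) ⁻¹' E)) with hg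
      have hgm : Measurable g := measurable_measure_prodMk_left (hE.preimage (by fun_prop))
      have hg1 : ∀ a, g a ≤ 1 := fun a => prob_le_one
      have hproc_apply : ∀ c : ℝ, gaussianReal (x * c) v E = ∫⁻ a, g a ∂(gaussianReal c v) := by
        intro c
        rw [← procA c, Measure.map_apply (by fun_prop) hE,
          Measure.prod_apply (hE.preimage (by fun_prop))]
      have hN1 : gaussianReal x v E = ∫⁻ a, g a ∂(gaussianReal 1 v) := by
        have := hproc_apply 1
        rwa [mul_one] at this
      have hN0 : gaussianReal 0 v E = ∫⁻ a, g a ∂(gaussianReal 0 v) := by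
        have := hproc_apply 0
        rwa [mul_zero] at this
      have hPx : (mixG γ x v) E = ∫⁻ a, g a ∂(mixG γ 1 v) := by
        rw [mixG_apply, hN0, hN1, mixG, lintegral_add_measure, lintegral_smul_measure,
          lintegral_smul_measure]
        simp only [smul_eq_mul]
      rw [hPx, hN0]
      exact lintegral_sub_le_hsDiv _ _ α hα g hgm hg1

section reindex
variable {m : ℕ} (i : Fin (m + 1))

/-- the bijection (S, b) ↦ S ∪ (if b then {i} else ∅) -/
noncomputable def eIns : Finset (Fin m) × Bool → Finset (Fin (m + 1)) := fun p =>
  if p.2 then insert i (p.1.map i.succAboveEmb) else p.1.map i.succAboveEmb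

lemma not_mem_map_succAboveEmb (S : Finset (Fin m)) : i ∉ S.map i.succAboveEmb := by
  intro hmem
  obtain ⟨j, -, hj⟩ := Finset.mem_map.mp hmem
  exact Fin.succAbove_ne i j (by simpa using hj)

lemma eIns_bijective : Function.Bijective (eIns i) := by
  constructor
  · rintro ⟨S, b⟩ ⟨S', b'⟩ h
    cases b <;> cases b' <;> simp only [eIns, if_true, if_false, Bool.false_eq_true,
      Bool.true_eq_false, ite_true, ite_false] at h
    · exact Prod.ext (Finset.map_injective _ h) rfl
    · have : i ∈ S.map i.succAboveEmb := by
        rw [h]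
        exact Finset.mem_insert_self i _
      exact absurd this (not_mem_map_succAboveEmb i S)
    · have : i ∈ S'.map i.succAboveEmb := by
        rw [← h]
        exact Finset.mem_insert_self i _
      exact absurd this (not_mem_map_succAboveEmb i S')
    · have h2 : (insert i (S.map i.succAboveEmb)).erase i
          = (insert i (S'.map i.succAboveEmb)).erase i := by rw [h]
      rw [Finset.erase_insert (not_mem_map_succAboveEmb i S),
        Finset.erase_insert (not_mem_map_succAboveEmb i S')] at h2
      exact Prod.ext (Finset.map_injective _ h2) rfl
  · intro T
    set S : Finset (Fin m) := Finset.univ.filter (fun j => i.succAbove j ∈ T) with hS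
    have hmap : S.map i.succAboveEmb = T.erase i := by
      ext k
      simp only [Finset.mem_map, hS, Finset.mem_filter, Finset.mem_univ, true_and,
        Finset.mem_erase, Fin.succAboveEmb_apply]
      constructor
      · rintro ⟨j, hjT, rfl⟩
        exact ⟨Fin.succAbove_ne i j, hjT⟩
      · rintro ⟨hki, hkT⟩
        obtain ⟨j, rfl⟩ := Fin.exists_succAbove_eq hki
        exact ⟨j, hkT, rfl⟩
    by_cases hiT : i ∈ T
    · exact ⟨⟨S, true⟩, by simp only [eIns, if_true, hmap, Finset.insert_erase hiT]⟩
    · exact ⟨⟨S, false⟩, by simp [eIns, hmap, Finset.erase_eq_of_notMem hiT]⟩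

lemma poissonGauss_decomp (σ γ : ℝ) (D : Fin (m + 1) → ℝ) :
    poissonGauss σ γ D = ∑ S : Finset (Fin m),
      (ENNReal.ofReal ((1 - γ) * (γ ^ S.card * (1 - γ) ^ (m - S.card))) •
          gaussianReal (∑ j ∈ S, D (i.succAbove j)) ⟨σ ^ 2, sq_nonneg σ⟩
        + ENNReal.ofReal (γ * (γ ^ S.card * (1 - γ) ^ (m - S.card))) •
          gaussianReal (D i + ∑ j ∈ S, D (i.succAbove j)) ⟨σ ^ 2, sq_nonneg σ⟩) := by
  set F : Finset (Fin (m + 1)) → Measure ℝ := fun T =>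
    ENNReal.ofReal (γ ^ T.card * (1 - γ) ^ (m + 1 - T.card)) •
      gaussianReal (∑ j ∈ T, D j) ⟨σ ^ 2, sq_nonneg σ⟩ with hF
  have h0 : poissonGauss σ γ D = ∑ T : Finset (Fin (m + 1)), F T := rfl
  rw [h0, ← Fintype.sum_bijective (eIns i) (eIns_bijective i) (fun p => F (eIns i p)) F
    (fun p => rfl), Fintype.sum_prod_type]
  apply Finset.sum_congr rfl
  intro S _
  have hcard : S.card ≤ m := by simpa using Finset.card_le_univ S
  have hsum_map : ∑ j ∈ S.map i.succAboveEmb, D j = ∑ j ∈ S, D (i.succAbove j) := by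
    rw [Finset.sum_map]
    rfl
  have hc1 : γ ^ (S.card + 1) * (1 - γ) ^ (m + 1 - (S.card + 1))
      = γ * (γ ^ S.card * (1 - γ) ^ (m - S.card)) := by
    rw [Nat.succ_sub_succ]
    ring
  have hc2 : γ ^ S.card * (1 - γ) ^ (m + 1 - S.card)
      = (1 - γ) * (γ ^ S.card * (1 - γ) ^ (m - S.card)) := by
    rw [Nat.succ_sub hcard, pow_succ]
    ring
  rw [Fintype.sum_bool, add_comm]
  congr 1
  · simp only [hF, eIns, if_false, Bool.false_eq_true, ite_false]
    rw [Finset.card_map, hsum_map, hc2]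
  · simp only [hF, eIns, if_true, ite_true]
    rw [Finset.card_insert_of_notMem (not_mem_map_succAboveEmb i S), Finset.card_map,
      Finset.sum_insert (not_mem_map_succAboveEmb i S), hsum_map, hc1]
end reindex


lemma coeff_sum_one (m : ℕ) :
    ∑ S : Finset (Fin m), γ ^ S.card * (1 - γ) ^ (m - S.card) = 1 := by
  have h := Finset.prod_add (fun _ : Fin m => γ) (fun _ : Fin m => 1 - γ) Finset.univ
  simp only [Finset.prod_const] at h
  rw [Finset.powerset_univ] at h
  calc ∑ S : Finset (Fin m), γ ^ S.card * (1 - γ) ^ (m - S.card)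
      = ∑ S : Finset (Fin m), γ ^ S.card * (1 - γ) ^ ((Finset.univ \ S).card) := by
        apply Finset.sum_congr rfl
        intro S _
        rw [Finset.card_sdiff_of_subset (Finset.subset_univ S), Finset.card_univ, Fintype.card_fin]
    _ = (γ + (1 - γ)) ^ Finset.univ.card := h.symm
    _ = 1 := by simp

lemma coeff_ennreal_sum_one (hγ0 : 0 ≤ γ) (hγ1 : γ ≤ 1) (m : ℕ) :
    ∑ S : Finset (Fin m), ENNReal.ofReal (γ ^ S.card * (1 - γ) ^ (m - S.card)) = 1 := by
  have hnn : ∀ S : Finset (Fin m), 0 ≤ γ ^ S.card * (1 - γ) ^ (m - S.card) := fun S => by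
    have h1 : (0:ℝ) ≤ 1 - γ := by linarith
    positivity
  rw [← ENNReal.ofReal_sum_of_nonneg (fun S _ => hnn S), coeff_sum_one]
  simp

lemma poissonGauss_zeros (σ : ℝ) (hγ0 : 0 ≤ γ) (hγ1 : γ ≤ 1) (m : ℕ) :
    poissonGauss σ γ (fun _ : Fin m => (0 : ℝ)) = gaussianReal 0 ⟨σ ^ 2, sq_nonneg σ⟩ := by
  unfold poissonGauss
  simp only [Finset.sum_const_zero]
  rw [← Finset.sum_smul, coeff_ennreal_sum_one hγ0 hγ1, one_smul]

lemma poissonGauss_snoc (σ : ℝ) (hγ0 : 0 ≤ γ) (hγ1 : γ ≤ 1) (m : ℕ) :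
    poissonGauss σ γ (Fin.snoc (fun _ : Fin m => (0 : ℝ)) 1) =
      ENNReal.ofReal (1 - γ) • gaussianReal 0 ⟨σ ^ 2, sq_nonneg σ⟩ +
        ENNReal.ofReal γ • gaussianReal 1 ⟨σ ^ 2, sq_nonneg σ⟩ := by
  set v : ℝ≥0 := ⟨σ ^ 2, sq_nonneg σ⟩
  set D : Fin (m + 1) → ℝ := Fin.snoc (fun _ : Fin m => (0 : ℝ)) 1 with hD
  have hDlast : D (Fin.last m) = 1 := by simp [hD]
  have hDcast : ∀ j : Fin m, D ((Fin.last m).succAbove j) = 0 := fun j => by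
    simp [hD, Fin.succAbove_last]
  rw [poissonGauss_decomp (Fin.last m) σ γ D]
  have hterm : ∀ S : Finset (Fin m),
      (ENNReal.ofReal ((1 - γ) * (γ ^ S.card * (1 - γ) ^ (m - S.card))) •
          gaussianReal (∑ j ∈ S, D ((Fin.last m).succAbove j)) v
        + ENNReal.ofReal (γ * (γ ^ S.card * (1 - γ) ^ (m - S.card))) •
          gaussianReal (D (Fin.last m) + ∑ j ∈ S, D ((Fin.last m).succAbove j)) v)
      = ENNReal.ofReal (1 - γ) •
          (ENNReal.ofReal (γ ^ S.card * (1 - γ) ^ (m - S.card)) • gaussianReal 0 v)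
        + ENNReal.ofReal γ •
          (ENNReal.ofReal (γ ^ S.card * (1 - γ) ^ (m - S.card)) • gaussianReal 1 v) := by
    intro S
    have hnn : 0 ≤ γ ^ S.card * (1 - γ) ^ (m - S.card) := by
      have h1 : (0:ℝ) ≤ 1 - γ := by linarith
      positivity
    have hz : ∑ j ∈ S, D ((Fin.last m).succAbove j) = 0 := by
      apply Finset.sum_eq_zero
      intro j _
      exact hDcast j
    rw [hz, hDlast, add_zero, ENNReal.ofReal_mul (by linarith : (0:ℝ) ≤ 1 - γ),
      ENNReal.ofReal_mul hγ0, smul_smul, smul_smul]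
  rw [Finset.sum_congr rfl (fun S _ => hterm S), Finset.sum_add_distrib,
    ← Finset.smul_sum, ← Finset.smul_sum, ← Finset.sum_smul, ← Finset.sum_smul,
    coeff_ennreal_sum_one hγ0 hγ1, one_smul, one_smul]


lemma mix2_prob (hγ0 : 0 ≤ γ) (hγ1 : γ ≤ 1) (a b : ℝ) (v : ℝ≥0) :
    IsProbabilityMeasure (ENNReal.ofReal (1 - γ) • gaussianReal a v
      + ENNReal.ofReal γ • gaussianReal b v) := by
  constructor
  simp only [Measure.add_apply, Measure.smul_apply, smul_eq_mul, measure_univ, mul_one]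
  rw [← ENNReal.ofReal_add (by linarith) hγ0]
  norm_num

/-- translation invariance -/
lemma hsDiv_mix_translate (α : ℝ) (hα : 0 ≤ α) (hγ0 : 0 ≤ γ) (hγ1 : γ ≤ 1)
    (μ0 x : ℝ) (v : ℝ≥0) :
    hsDiv α (ENNReal.ofReal (1 - γ) • gaussianReal μ0 v
        + ENNReal.ofReal γ • gaussianReal (μ0 + x) v) (gaussianReal μ0 v)
      = hsDiv α (mixG γ x v) (gaussianReal 0 v) := by
  have : IsProbabilityMeasure (mixG γ x v) := mix2_prob hγ0 hγ1 0 x v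
  have key := hsDiv_map_equiv α hα (mixG γ x v) (gaussianReal 0 v)
    (Homeomorph.addRight μ0).toMeasurableEquiv
  have hco : ⇑(Homeomorph.addRight μ0).toMeasurableEquiv = (· + μ0) := rfl
  have hmap1 : (mixG γ x v).map (Homeomorph.addRight μ0).toMeasurableEquiv
      = ENNReal.ofReal (1 - γ) • gaussianReal μ0 v
        + ENNReal.ofReal γ • gaussianReal (μ0 + x) v := by
    rw [hco, mixG, Measure.map_add _ _ (measurable_add_const μ0), Measure.map_smul,
      Measure.map_smul, gaussianReal_map_add_const, gaussianReal_map_add_const, zero_add,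
      add_comm x μ0]
  have hmap2 : (gaussianReal 0 v).map (Homeomorph.addRight μ0).toMeasurableEquiv
      = gaussianReal μ0 v := by
    rw [hco, gaussianReal_map_add_const, zero_add]
  rw [hmap1, hmap2] at key
  exact key

/-- the main inequality -/
lemma main_ineq (hσ : 0 < σ) (hγ0 : 0 ≤ γ) (hγ1 : γ ≤ 1) (m : ℕ)
    (D : Fin (m + 1) → ℝ) (D' : Fin m → ℝ)
    (hD : ∀ j, D j ∈ Set.Icc (-1 : ℝ) 1)
    (hrel : ∃ i : Fin (m + 1), ∀ j : Fin m, D' j = D (i.succAbove j))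
    (α : ℝ) (hα : 0 ≤ α) :
    hsDiv α (poissonGauss σ γ D) (poissonGauss σ γ D') ≤
      hsDiv α (mixG γ 1 ⟨σ ^ 2, sq_nonneg σ⟩) (gaussianReal 0 ⟨σ ^ 2, sq_nonneg σ⟩) := by
  obtain ⟨i, hi⟩ := hrel
  set v : ℝ≥0 := ⟨σ ^ 2, sq_nonneg σ⟩ with hv
  set R := hsDiv α (mixG γ 1 v) (gaussianReal 0 v) with hR
  set c : Finset (Fin m) → ℝ := fun S => γ ^ S.card * (1 - γ) ^ (m - S.card) with hc
  have h1γ : (0:ℝ) ≤ 1 - γ := by linarith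
  have hcnn : ∀ S, 0 ≤ c S := fun S => by rw [hc]; positivity
  set μS : Finset (Fin m) → ℝ := fun S => ∑ j ∈ S, D (i.succAbove j) with hμS
  apply hsDiv_le
  intro E hE
  set A : Finset (Fin m) → ℝ := fun S => (gaussianReal (μS S) v E).toReal with hA
  set B : Finset (Fin m) → ℝ := fun S => (gaussianReal (D i + μS S) v E).toReal with hB
  -- value of poissonGauss D' at E
  have hD'val : ((poissonGauss σ γ D') E).toReal = ∑ S : Finset (Fin m), c S * A S := by
    have h0 : (poissonGauss σ γ D') E
        = ∑ S : Finset (Fin m), ENNReal.ofReal (c S) * gaussianReal (μS S) v E := by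
      rw [poissonGauss, Measure.finset_sum_apply]
      apply Finset.sum_congr rfl
      intro S _
      rw [Measure.smul_apply, smul_eq_mul]
      have hss : ∑ j ∈ S, D' j = μS S := Finset.sum_congr rfl fun j _ => hi j
      rw [hss]
    rw [h0, ENNReal.toReal_sum (fun S _ => ENNReal.mul_ne_top ENNReal.ofReal_ne_top
      (measure_ne_top _ _))]
    exact Finset.sum_congr rfl fun S _ => by
      rw [ENNReal.toReal_mul, ENNReal.toReal_ofReal (hcnn S)]
  -- value of poissonGauss D at E
  have hDval : ((poissonGauss σ γ D) E).toReal
      = ∑ S : Finset (Fin m), ((1 - γ) * (c S * A S) + γ * (c S * B S)) := by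
    have h0 : (poissonGauss σ γ D) E = ∑ S : Finset (Fin m),
        (ENNReal.ofReal ((1 - γ) * c S) * gaussianReal (μS S) v E
          + ENNReal.ofReal (γ * c S) * gaussianReal (D i + μS S) v E) := by
      rw [poissonGauss_decomp i σ γ D, Measure.finset_sum_apply]
      apply Finset.sum_congr rfl
      intro S _
      rw [Measure.add_apply, Measure.smul_apply, Measure.smul_apply, smul_eq_mul, smul_eq_mul]
    rw [h0, ENNReal.toReal_sum (fun S _ => ?_)]
    · apply Finset.sum_congr rfl
      intro S _
      rw [ENNReal.toReal_add (ENNReal.mul_ne_top ENNReal.ofReal_ne_top (measure_ne_top _ _))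
        (ENNReal.mul_ne_top ENNReal.ofReal_ne_top (measure_ne_top _ _)),
        ENNReal.toReal_mul, ENNReal.toReal_mul,
        ENNReal.toReal_ofReal (by positivity : (0:ℝ) ≤ (1 - γ) * c S),
        ENNReal.toReal_ofReal (by positivity : (0:ℝ) ≤ γ * c S)]
      ring
    · exact ENNReal.add_ne_top.mpr ⟨ENNReal.mul_ne_top ENNReal.ofReal_ne_top (measure_ne_top _ _),
        ENNReal.mul_ne_top ENNReal.ofReal_ne_top (measure_ne_top _ _)⟩
  -- per-S bound
  have hperS : ∀ S : Finset (Fin m), ((1 - γ) * A S + γ * B S) - α * A S ≤ R := by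
    intro S
    set P : Measure ℝ := ENNReal.ofReal (1 - γ) • gaussianReal (μS S) v
      + ENNReal.ofReal γ • gaussianReal (μS S + D i) v with hP
    have : IsProbabilityMeasure P := mix2_prob hγ0 hγ1 _ _ v
    have hPE : (P E).toReal = (1 - γ) * A S + γ * B S := by
      rw [hP, Measure.add_apply, Measure.smul_apply, Measure.smul_apply, smul_eq_mul,
        smul_eq_mul, ENNReal.toReal_add (ENNReal.mul_ne_top ENNReal.ofReal_ne_top
          (measure_ne_top _ _)) (ENNReal.mul_ne_top ENNReal.ofReal_ne_top (measure_ne_top _ _)),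
        ENNReal.toReal_mul, ENNReal.toReal_mul, ENNReal.toReal_ofReal h1γ,
        ENNReal.toReal_ofReal hγ0, hA, hB, add_comm (μS S) (D i)]
    calc ((1 - γ) * A S + γ * B S) - α * A S
        = (P E).toReal - α * (gaussianReal (μS S) v E).toReal := by rw [hPE, hA]
      _ ≤ hsDiv α P (gaussianReal (μS S) v) := le_hsDiv α hα P _ E hE
      _ = hsDiv α (mixG γ (D i) v) (gaussianReal 0 v) :=
          hsDiv_mix_translate α hα hγ0 hγ1 (μS S) (D i) v
      _ ≤ R := hsDiv_mixG_mono hσ hγ0 hγ1 (D i) (hD i) α hα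
  -- combine
  rw [hDval, hD'val, Finset.mul_sum, ← Finset.sum_sub_distrib]
  calc ∑ S : Finset (Fin m), (((1 - γ) * (c S * A S) + γ * (c S * B S)) - α * (c S * A S))
      = ∑ S : Finset (Fin m), c S * (((1 - γ) * A S + γ * B S) - α * A S) := by
        apply Finset.sum_congr rfl
        intro S _
        ring
    _ ≤ ∑ S : Finset (Fin m), c S * R := Finset.sum_le_sum fun S _ =>
        mul_le_mul_of_nonneg_left (hperS S) (hcnn S)
    _ = R := by rw [← Finset.sum_mul, coeff_sum_one, one_mul]


end Aux

/-- Dominating pair of datasets for the Poisson-subsampled Gaussian mechanism under the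
remove relation: for datasets with entries in `[−1,1]` where `D'` is `D` with one entry
removed, `H_α(Mγ(D) ‖ Mγ(D')) ≤ H_α((1−γ)N(0,σ²) + γN(1,σ²) ‖ N(0,σ²))` for all `α ≥ 0`,
and the bound is realized by `D = (0,…,0,1)`, `D' = (0,…,0)`. -/
theorem poissonGauss_dominating_pair_remove (σ γ : ℝ) (hσ : 0 < σ) (hγ0 : 0 ≤ γ) (hγ1 : γ ≤ 1) :
    (∀ (m : ℕ) (D : Fin (m + 1) → ℝ) (D' : Fin m → ℝ),
      (∀ j, D j ∈ Set.Icc (-1 : ℝ) 1) → (∀ j, D' j ∈ Set.Icc (-1 : ℝ) 1) →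
      (∃ i : Fin (m + 1), ∀ j : Fin m, D' j = D (i.succAbove j)) →
      ∀ α : ℝ, 0 ≤ α →
        hsDiv α (poissonGauss σ γ D) (poissonGauss σ γ D') ≤
          hsDiv α
            (ENNReal.ofReal (1 - γ) • gaussianReal 0 ⟨σ ^ 2, sq_nonneg σ⟩ +
              ENNReal.ofReal γ • gaussianReal 1 ⟨σ ^ 2, sq_nonneg σ⟩)
            (gaussianReal 0 ⟨σ ^ 2, sq_nonneg σ⟩)) ∧
    (∀ m : ℕ,
      poissonGauss σ γ (Fin.snoc (fun _ : Fin m => (0 : ℝ)) 1) =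
        ENNReal.ofReal (1 - γ) • gaussianReal 0 ⟨σ ^ 2, sq_nonneg σ⟩ +
          ENNReal.ofReal γ • gaussianReal 1 ⟨σ ^ 2, sq_nonneg σ⟩ ∧
      poissonGauss σ γ (fun _ : Fin m => (0 : ℝ)) = gaussianReal 0 ⟨σ ^ 2, sq_nonneg σ⟩) := by
  constructor
  · intro m D D' hD hD' hrel α hα
    exact main_ineq hσ hγ0 hγ1 m D D' hD hrel α hα
  · intro m
    exact ⟨poissonGauss_snoc σ hγ0 hγ1 m, poissonGauss_zeros σ hγ0 hγ1 m⟩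
end

section
/- Convolution decomposition of the Poisson-subsampled Gaussian mechanism: let σ > 0, γ ∈ [0,1], m ≥ 0, x ∈ ℝ^m, and a ∈ ℝ. Then Mγ(x₁,…,x_m,a) equals the convolution ν_x ∗ ((1−γ)·N(0,σ²) + γ·N(a,σ²)), where ν_x := ∑_{S ⊆ {1,…,m}} γ^{|S|}(1−γ)^{m−|S|} · δ_{∑_{i∈S} x_i} is the law of the Poisson-subsampled sum of x, and ∗ denotes convolution of measures on ℝ (the pushforward of the independent product ν_x ⊗ ((1−γ)·N(0,σ²) + γ·N(a,σ²)) under addition). -/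
open MeasureTheory ProbabilityTheory
open scoped ENNReal NNReal


lemma prod_smul_left (c : ℝ≥0∞) (μ ν : Measure ℝ) [SFinite ν] :
    (c • μ).prod ν = c • (μ.prod ν) := by
  ext s hs
  rw [Measure.smul_apply, Measure.prod_apply hs, Measure.prod_apply hs,
    lintegral_smul_measure]

lemma prod_smul_right (c : ℝ≥0∞) (μ ν : Measure ℝ) [SFinite ν] :
    μ.prod (c • ν) = c • (μ.prod ν) := by
  ext s hs
  rw [Measure.smul_apply, Measure.prod_apply hs, Measure.prod_apply hs]
  simp only [Measure.smul_apply, smul_eq_mul]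
  rw [lintegral_const_mul _ (measurable_measure_prodMk_left hs)]

lemma smul_conv (c : ℝ≥0∞) (μ ν : Measure ℝ) [SFinite ν] :
    (c • μ).conv ν = c • (μ.conv ν) := by
  simp only [Measure.conv, prod_smul_left, Measure.map_smul]

lemma conv_smul (c : ℝ≥0∞) (μ ν : Measure ℝ) [SFinite ν] :
    μ.conv (c • ν) = c • (μ.conv ν) := by
  simp only [Measure.conv, prod_smul_right, Measure.map_smul]

lemma dirac_conv (c : ℝ) (ν : Measure ℝ) [SFinite ν] :
    (Measure.dirac c).conv ν = ν.map (c + ·) := by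
  simp only [Measure.conv]
  rw [Measure.dirac_prod, Measure.map_map (by fun_prop) (by fun_prop)]
  rfl

lemma sfinite_finset_sum {ι : Type*} (f : ι → Measure ℝ) [∀ i, SFinite (f i)] (s : Finset ι) :
    SFinite (∑ i ∈ s, f i) := by
  classical
  induction s using Finset.cons_induction with
  | empty => simpa using inferInstanceAs (SFinite (0 : Measure ℝ))
  | cons a s ha ih => rw [Finset.sum_cons]; haveI := ih; infer_instance

lemma finset_sum_conv {ι : Type*} (f : ι → Measure ℝ) [∀ i, SFinite (f i)]
    (ν : Measure ℝ) [SFinite ν] (s : Finset ι) :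
    (∑ i ∈ s, f i).conv ν = ∑ i ∈ s, (f i).conv ν := by
  classical
  induction s using Finset.cons_induction with
  | empty => simp [Measure.conv_zero]
  | cons a s ha ih =>
    haveI := sfinite_finset_sum f s
    rw [Finset.sum_cons, Measure.add_conv, ih, Finset.sum_cons]

lemma dirac_conv_gauss (s a : ℝ) (c0 c1 : ℝ≥0∞) (v : ℝ≥0) :
    (Measure.dirac s).conv (c0 • gaussianReal 0 v + c1 • gaussianReal a v) =
      c0 • gaussianReal s v + c1 • gaussianReal (a + s) v := by
  rw [Measure.conv_add, conv_smul, conv_smul, dirac_conv, dirac_conv,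
    gaussianReal_map_const_add, gaussianReal_map_const_add, zero_add]

section bij
variable {m : ℕ}

noncomputable def snocSet (p : Finset (Fin m) × Bool) : Finset (Fin (m + 1)) :=
  cond p.2 (insert (Fin.last m) (p.1.map Fin.castSuccEmb)) (p.1.map Fin.castSuccEmb)

lemma last_not_mem_map (S : Finset (Fin m)) : Fin.last m ∉ S.map Fin.castSuccEmb := by
  intro hmem
  obtain ⟨i, -, h⟩ := Finset.mem_map.1 hmem
  exact (Fin.castSucc_lt_last i).ne h

lemma last_mem_snocSet (p : Finset (Fin m) × Bool) :
    Fin.last m ∈ snocSet p ↔ p.2 = true := by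
  obtain ⟨S, b⟩ := p
  cases b with
  | false => simpa [snocSet] using last_not_mem_map S
  | true => simp [snocSet]

lemma snocSet_bijective : Function.Bijective (snocSet (m := m)) := by
  rw [Fintype.bijective_iff_injective_and_card]
  constructor
  · rintro ⟨S, b⟩ ⟨S', b'⟩ h
    have hb : b = b' := by
      have h1 := last_mem_snocSet (S, b)
      have h2 := last_mem_snocSet (S', b')
      rw [h] at h1; rw [h1] at h2
      cases b <;> cases b' <;> simp_all
    subst hb
    cases b with
    | false =>
      simp only [snocSet, cond_false] at h
      rw [Finset.map_injective _ h]
    | true =>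
      simp only [snocSet, cond_true] at h
      have := congrArg (fun t => Finset.erase t (Fin.last m)) h
      simp only [Finset.erase_insert (last_not_mem_map S),
        Finset.erase_insert (last_not_mem_map S')] at this
      rw [Finset.map_injective _ this]
  · simp [Fintype.card_finset, pow_succ, mul_comm]

lemma card_snocSet (S : Finset (Fin m)) (b : Bool) :
    (snocSet (S, b)).card = S.card + cond b 1 0 := by
  cases b with
  | false => simp [snocSet]
  | true =>
    simp only [snocSet, cond_true]
    rw [Finset.card_insert_of_notMem (last_not_mem_map S), Finset.card_map]

lemma sum_snocSet (S : Finset (Fin m)) (b : Bool) (x : Fin m → ℝ) (a : ℝ) :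
    ∑ i ∈ snocSet (S, b), Fin.snoc x a i = (∑ i ∈ S, x i) + cond b a 0 := by
  have hmap : ∑ i ∈ S.map Fin.castSuccEmb, Fin.snoc x a i = ∑ i ∈ S, x i := by
    rw [Finset.sum_map]
    exact Finset.sum_congr rfl fun i _ => by
      rw [show (Fin.castSuccEmb i : Fin (m+1)) = i.castSucc from rfl]
      exact Fin.snoc_castSucc (α := fun _ => ℝ) a x i
  cases b with
  | false => simpa [snocSet] using hmap
  | true =>
    simp only [snocSet, cond_true]
    rw [Finset.sum_insert (last_not_mem_map S), hmap, Fin.snoc_last, add_comm]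

end bij


/-- The law of the Poisson-subsampled sum of the tuple `x`:
`ν_x = ∑_{S ⊆ [m]} γ^{|S|} (1−γ)^{m−|S|} · δ_{∑_{i∈S} x_i}`. -/
noncomputable def poissonSumLaw (γ : ℝ) {m : ℕ} (x : Fin m → ℝ) : Measure ℝ :=
  ∑ S : Finset (Fin m),
    ENNReal.ofReal (γ ^ S.card * (1 - γ) ^ (m - S.card)) •
      Measure.dirac (∑ i ∈ S, x i)

set_option maxHeartbeats 1000000 in
/-- Convolution decomposition of the Poisson-subsampled Gaussian mechanism:
`Mγ(x₁,…,x_m,a) = ν_x ∗ ((1−γ)·N(0,σ²) + γ·N(a,σ²))`. -/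
theorem poissonGauss_snoc_eq_conv (σ γ : ℝ) (hσ : 0 < σ) (hγ0 : 0 ≤ γ) (hγ1 : γ ≤ 1)
    (m : ℕ) (x : Fin m → ℝ) (a : ℝ) :
    poissonGauss σ γ (Fin.snoc x a) =
      Measure.conv (poissonSumLaw γ x)
        (ENNReal.ofReal (1 - γ) • gaussianReal 0 ⟨σ ^ 2, sq_nonneg σ⟩ +
          ENNReal.ofReal γ • gaussianReal a ⟨σ ^ 2, sq_nonneg σ⟩) := by
  classical
  have hγ' : (0:ℝ) ≤ 1 - γ := sub_nonneg.2 hγ1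
  set v : ℝ≥0 := ⟨σ ^ 2, sq_nonneg σ⟩ with hv
  have hRHS : Measure.conv (poissonSumLaw γ x)
        (ENNReal.ofReal (1 - γ) • gaussianReal 0 v + ENNReal.ofReal γ • gaussianReal a v)
      = ∑ S : Finset (Fin m),
          ENNReal.ofReal (γ ^ S.card * (1 - γ) ^ (m - S.card)) •
            (ENNReal.ofReal (1 - γ) • gaussianReal (∑ i ∈ S, x i) v +
              ENNReal.ofReal γ • gaussianReal (a + ∑ i ∈ S, x i) v) := by
    unfold poissonSumLaw
    rw [finset_sum_conv]
    refine Finset.sum_congr rfl fun S _ => ?_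
    rw [smul_conv, dirac_conv_gauss]
  rw [hRHS]
  unfold poissonGauss
  have key : ∀ F : Finset (Fin (m + 1)) → Measure ℝ,
      ∑ T : Finset (Fin (m + 1)), F T = ∑ p : Finset (Fin m) × Bool, F (snocSet p) :=
    fun F => (Fintype.sum_bijective _ snocSet_bijective _ _ (fun p => rfl)).symm
  rw [key]
  rw [Fintype.sum_prod_type]
  refine Finset.sum_congr rfl fun S _ => ?_
  have hk : S.card ≤ m := le_trans (Finset.card_le_univ S) (le_of_eq (Finset.card_fin m))
  have h0 : (0:ℝ) ≤ γ ^ S.card * (1 - γ) ^ (m - S.card) :=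
    mul_nonneg (pow_nonneg hγ0 _) (pow_nonneg hγ' _)
  rw [Fintype.sum_bool]
  rw [card_snocSet, card_snocSet, sum_snocSet, sum_snocSet]
  simp only [cond_true, cond_false, add_zero]
  have e1 : m + 1 - (S.card + 1) = m - S.card := by omega
  have e2 : m + 1 - S.card = (m - S.card) + 1 := by omega
  rw [e1, e2]
  have hc1 : ENNReal.ofReal (γ ^ (S.card + 1) * (1 - γ) ^ (m - S.card))
      = ENNReal.ofReal (γ ^ S.card * (1 - γ) ^ (m - S.card)) * ENNReal.ofReal γ := by
    rw [← ENNReal.ofReal_mul h0]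
    exact congrArg _ (by ring)
  have hc0 : ENNReal.ofReal (γ ^ S.card * (1 - γ) ^ (m - S.card + 1))
      = ENNReal.ofReal (γ ^ S.card * (1 - γ) ^ (m - S.card)) * ENNReal.ofReal (1 - γ) := by
    rw [← ENNReal.ofReal_mul h0]
    exact congrArg _ (by ring)
  rw [hc1, hc0, smul_add, smul_smul, smul_smul, add_comm (∑ i ∈ S, x i) a]
  exact add_comm _ _
end

section
/- Extremality of the endpoints for subsampled Gaussian mixtures: let σ > 0, γ ∈ [0,1], and a, a' ∈ [−1,1]. Then for every α ≥ 0, H_α((1−γ)·N(0,σ²) + γ·N(a,σ²) ‖ (1−γ)·N(0,σ²) + γ·N(a',σ²)) ≤ H_α((1−γ)·N(0,σ²) + γ·N(1,σ²) ‖ (1−γ)·N(0,σ²) + γ·N(−1,σ²)). -/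
open MeasureTheory ProbabilityTheory
open scoped ENNReal NNReal

namespace HsAux

open Set Filter
open scoped Topology

variable {v : ℝ≥0}

/-- Cross-multiplied monotone likelihood ratio property of Gaussian pdfs. -/
lemma pdf_cross (hv : v ≠ 0) {m₁ m₂ x k : ℝ} (h : 0 ≤ (x - k) * (m₂ - m₁)) :
    gaussianPDFReal m₁ v x * gaussianPDFReal m₂ v k ≤
      gaussianPDFReal m₂ v x * gaussianPDFReal m₁ v k := by
  have hv' : (0:ℝ) < (v:ℝ) := lt_of_le_of_ne v.2 (by exact_mod_cast (Ne.symm hv))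
  unfold gaussianPDFReal
  calc (Real.sqrt (2 * Real.pi * v))⁻¹ * Real.exp (-(x - m₁) ^ 2 / (2 * v)) *
        ((Real.sqrt (2 * Real.pi * v))⁻¹ * Real.exp (-(k - m₂) ^ 2 / (2 * v)))
      = (Real.sqrt (2 * Real.pi * v))⁻¹ * (Real.sqrt (2 * Real.pi * v))⁻¹ *
        Real.exp (-(x - m₁) ^ 2 / (2 * v) + -(k - m₂) ^ 2 / (2 * v)) := by
        rw [Real.exp_add]; ring
    _ ≤ (Real.sqrt (2 * Real.pi * v))⁻¹ * (Real.sqrt (2 * Real.pi * v))⁻¹ *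
        Real.exp (-(x - m₂) ^ 2 / (2 * v) + -(k - m₁) ^ 2 / (2 * v)) := by
        apply mul_le_mul_of_nonneg_left _ (by positivity)
        apply Real.exp_le_exp.2
        rw [← add_div, ← add_div, div_le_div_iff₀ (by positivity) (by positivity)]
        nlinarith [h]
    _ = (Real.sqrt (2 * Real.pi * v))⁻¹ * Real.exp (-(x - m₂) ^ 2 / (2 * v)) *
        ((Real.sqrt (2 * Real.pi * v))⁻¹ * Real.exp (-(k - m₁) ^ 2 / (2 * v))) := by
        rw [Real.exp_add]; ring

/-- Measure version of the cross inequality, on a set where the pointwise bound holds. -/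
lemma cross_meas (hv : v ≠ 0) (m₁ m₂ k : ℝ) {S : Set ℝ}
    (h : ∀ x ∈ S, gaussianPDFReal m₁ v x * gaussianPDFReal m₂ v k ≤
      gaussianPDFReal m₂ v x * gaussianPDFReal m₁ v k) :
    gaussianPDF m₂ v k * gaussianReal m₁ v S ≤ gaussianPDF m₁ v k * gaussianReal m₂ v S := by
  rw [gaussianReal_apply _ hv, gaussianReal_apply _ hv,
    ← lintegral_const_mul _ (measurable_gaussianPDF _ _),
    ← lintegral_const_mul _ (measurable_gaussianPDF _ _)]
  refine setLIntegral_mono ((measurable_gaussianPDF _ _).const_mul _) (fun x hx => ?_)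
  unfold gaussianPDF
  rw [← ENNReal.ofReal_mul (gaussianPDFReal_nonneg _ _ _),
    ← ENNReal.ofReal_mul (gaussianPDFReal_nonneg _ _ _)]
  exact ENNReal.ofReal_le_ofReal (by
    calc gaussianPDFReal m₂ v k * gaussianPDFReal m₁ v x
        = gaussianPDFReal m₁ v x * gaussianPDFReal m₂ v k := by ring
      _ ≤ gaussianPDFReal m₂ v x * gaussianPDFReal m₁ v k := h x hx
      _ = gaussianPDFReal m₁ v k * gaussianPDFReal m₂ v x := by ring)

/-- Neyman–Pearson exchange: among sets of fixed `N(0,v)`-mass, an upper ray maximizes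
the `N(b,v)`-mass, when `b ≥ 0`. -/
lemma exchange_Ici (hv : v ≠ 0) {b : ℝ} (hb : 0 ≤ b) {E : Set ℝ} (hE : MeasurableSet E) (k : ℝ)
    (hmass : gaussianReal 0 v E = gaussianReal 0 v (Ici k)) :
    gaussianReal b v E ≤ gaussianReal b v (Ici k) := by
  set μ0 := gaussianReal 0 v with hμ0
  set μb := gaussianReal b v with hμb
  have hR : MeasurableSet (Ici k) := measurableSet_Ici
  have h1 : μ0 (E ∩ Ici k) + μ0 (E \ Ici k) = μ0 E := measure_inter_add_diff E hR
  have h2 : μ0 (Ici k ∩ E) + μ0 (Ici k \ E) = μ0 (Ici k) := measure_inter_add_diff (Ici k) hE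
  have hIC : E ∩ Ici k = Ici k ∩ E := inter_comm _ _
  have hfin : μ0 (E ∩ Ici k) ≠ ∞ := (measure_lt_top μ0 _).ne
  have hER : μ0 (E \ Ici k) = μ0 (Ici k \ E) := by
    have : μ0 (E ∩ Ici k) + μ0 (E \ Ici k) = μ0 (E ∩ Ici k) + μ0 (Ici k \ E) := by
      rw [h1, hmass, ← h2, hIC]
    exact (ENNReal.add_right_inj hfin).mp this
  have c2 : gaussianPDF 0 v k * μb (E \ Ici k) ≤ gaussianPDF b v k * μ0 (E \ Ici k) := by
    refine cross_meas hv b 0 k (fun x hx => pdf_cross hv ?_)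
    have : x < k := not_le.mp hx.2
    nlinarith
  have c1 : gaussianPDF b v k * μ0 (Ici k \ E) ≤ gaussianPDF 0 v k * μb (Ici k \ E) := by
    refine cross_meas hv 0 b k (fun x hx => pdf_cross hv ?_)
    have : k ≤ x := hx.1
    nlinarith
  have hsplitE : μb (E ∩ Ici k) + μb (E \ Ici k) = μb E := measure_inter_add_diff E hR
  have hsplitR : μb (Ici k ∩ E) + μb (Ici k \ E) = μb (Ici k) := measure_inter_add_diff (Ici k) hE
  have chain : gaussianPDF 0 v k * μb E ≤ gaussianPDF 0 v k * μb (Ici k) := by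
    calc gaussianPDF 0 v k * μb E
        = gaussianPDF 0 v k * μb (E ∩ Ici k) + gaussianPDF 0 v k * μb (E \ Ici k) := by
          rw [← mul_add, hsplitE]
      _ ≤ gaussianPDF 0 v k * μb (E ∩ Ici k) + gaussianPDF b v k * μ0 (E \ Ici k) :=
          add_le_add_right c2 _
      _ = gaussianPDF 0 v k * μb (E ∩ Ici k) + gaussianPDF b v k * μ0 (Ici k \ E) := by rw [hER]
      _ ≤ gaussianPDF 0 v k * μb (E ∩ Ici k) + gaussianPDF 0 v k * μb (Ici k \ E) :=
          add_le_add_right c1 _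
      _ = gaussianPDF 0 v k * μb (Ici k) := by rw [← mul_add, hIC, hsplitR]
  have h0 : gaussianPDF 0 v k ≠ 0 := (gaussianPDF_pos _ hv _).ne'
  have ht : gaussianPDF 0 v k ≠ ∞ := ENNReal.ofReal_ne_top
  exact (ENNReal.mul_le_mul_iff_right h0 ht).mp chain

/-- Neyman–Pearson exchange, lower-ray version for `b ≤ 0`. -/
lemma exchange_Iic (hv : v ≠ 0) {b : ℝ} (hb : b ≤ 0) {E : Set ℝ} (hE : MeasurableSet E) (k : ℝ)
    (hmass : gaussianReal 0 v E = gaussianReal 0 v (Iic k)) :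
    gaussianReal b v E ≤ gaussianReal b v (Iic k) := by
  set μ0 := gaussianReal 0 v with hμ0
  set μb := gaussianReal b v with hμb
  have hR : MeasurableSet (Iic k) := measurableSet_Iic
  have h1 : μ0 (E ∩ Iic k) + μ0 (E \ Iic k) = μ0 E := measure_inter_add_diff E hR
  have h2 : μ0 (Iic k ∩ E) + μ0 (Iic k \ E) = μ0 (Iic k) := measure_inter_add_diff (Iic k) hE
  have hIC : E ∩ Iic k = Iic k ∩ E := inter_comm _ _
  have hfin : μ0 (E ∩ Iic k) ≠ ∞ := (measure_lt_top μ0 _).ne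
  have hER : μ0 (E \ Iic k) = μ0 (Iic k \ E) := by
    have : μ0 (E ∩ Iic k) + μ0 (E \ Iic k) = μ0 (E ∩ Iic k) + μ0 (Iic k \ E) := by
      rw [h1, hmass, ← h2, hIC]
    exact (ENNReal.add_right_inj hfin).mp this
  have c2 : gaussianPDF 0 v k * μb (E \ Iic k) ≤ gaussianPDF b v k * μ0 (E \ Iic k) := by
    refine cross_meas hv b 0 k (fun x hx => pdf_cross hv ?_)
    have : k < x := not_le.mp hx.2
    nlinarith
  have c1 : gaussianPDF b v k * μ0 (Iic k \ E) ≤ gaussianPDF 0 v k * μb (Iic k \ E) := by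
    refine cross_meas hv 0 b k (fun x hx => pdf_cross hv ?_)
    have : x ≤ k := hx.1
    nlinarith
  have hsplitE : μb (E ∩ Iic k) + μb (E \ Iic k) = μb E := measure_inter_add_diff E hR
  have hsplitR : μb (Iic k ∩ E) + μb (Iic k \ E) = μb (Iic k) := measure_inter_add_diff (Iic k) hE
  have chain : gaussianPDF 0 v k * μb E ≤ gaussianPDF 0 v k * μb (Iic k) := by
    calc gaussianPDF 0 v k * μb E
        = gaussianPDF 0 v k * μb (E ∩ Iic k) + gaussianPDF 0 v k * μb (E \ Iic k) := by
          rw [← mul_add, hsplitE]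
      _ ≤ gaussianPDF 0 v k * μb (E ∩ Iic k) + gaussianPDF b v k * μ0 (E \ Iic k) :=
          add_le_add_right c2 _
      _ = gaussianPDF 0 v k * μb (E ∩ Iic k) + gaussianPDF b v k * μ0 (Iic k \ E) := by rw [hER]
      _ ≤ gaussianPDF 0 v k * μb (E ∩ Iic k) + gaussianPDF 0 v k * μb (Iic k \ E) :=
          add_le_add_right c1 _
      _ = gaussianPDF 0 v k * μb (Iic k) := by rw [← mul_add, hIC, hsplitR]
  have h0 : gaussianPDF 0 v k ≠ 0 := (gaussianPDF_pos _ hv _).ne'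
  have ht : gaussianPDF 0 v k ≠ ∞ := ENNReal.ofReal_ne_top
  exact (ENNReal.mul_le_mul_iff_right h0 ht).mp chain

lemma meas_Ici (b k : ℝ) : gaussianReal b v (Ici k) = gaussianReal 0 v (Ici (k - b)) := by
  have hmap : (gaussianReal 0 v).map (· + b) = gaussianReal b v := by
    rw [gaussianReal_map_add_const b, zero_add]
  rw [← hmap, Measure.map_apply (measurable_add_const b) measurableSet_Ici]
  congr 1
  ext x
  simp [sub_le_iff_le_add]

lemma meas_Iic (b k : ℝ) : gaussianReal b v (Iic k) = gaussianReal 0 v (Iic (k - b)) := by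
  have hmap : (gaussianReal 0 v).map (· + b) = gaussianReal b v := by
    rw [gaussianReal_map_add_const b, zero_add]
  rw [← hmap, Measure.map_apply (measurable_add_const b) measurableSet_Iic]
  congr 1
  ext x
  simp [le_sub_iff_add_le]

lemma refl_Ici (k : ℝ) : gaussianReal 0 v (Ici k) = gaussianReal 0 v (Iic (-k)) := by
  have hone : (⟨(-1:ℝ)^2, sq_nonneg _⟩ : ℝ≥0) = 1 := by
    ext; norm_num
  have hmap : (gaussianReal 0 v).map ((-1 : ℝ) * ·) = gaussianReal 0 v := by
    rw [gaussianReal_map_const_mul (-1 : ℝ), mul_zero]; congr 1; ext; simp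
  conv_lhs => rw [← hmap]
  rw [Measure.map_apply (measurable_const_mul _) measurableSet_Ici]
  congr 1
  ext x
  simp only [mem_preimage, mem_Ici, mem_Iic]
  constructor <;> intro h <;> linarith

lemma singleton_null (hv : v ≠ 0) (b k : ℝ) : gaussianReal b v {k} = 0 :=
  gaussianReal_absolutelyContinuous b hv (by simp)

lemma Iic_eq_Iio (hv : v ≠ 0) (b k : ℝ) : gaussianReal b v (Iic k) = gaussianReal b v (Iio k) := by
  apply le_antisymm
  · calc gaussianReal b v (Iic k) = gaussianReal b v (insert k (Iio k)) := by rw [Iio_insert]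
      _ ≤ gaussianReal b v {k} + gaussianReal b v (Iio k) := by
          rw [insert_eq]; exact measure_union_le _ _
      _ = gaussianReal b v (Iio k) := by rw [singleton_null hv, zero_add]
  · exact measure_mono Iio_subset_Iic_self

lemma mono_Ici (b : ℝ) {k k' : ℝ} (h : k ≤ k') :
    gaussianReal b v (Ici k') ≤ gaussianReal b v (Ici k) :=
  measure_mono (Ici_subset_Ici.mpr h)

lemma mono_Iic (b : ℝ) {k k' : ℝ} (h : k ≤ k') :
    gaussianReal b v (Iic k) ≤ gaussianReal b v (Iic k') :=
  measure_mono (Iic_subset_Iic.mpr h)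

/-- Core Neyman–Pearson bound, upper-ray version. -/
lemma core_Ici (hv : v ≠ 0) {a : ℝ} (ha : a ∈ Icc (-1 : ℝ) 1) {E : Set ℝ}
    (hE : MeasurableSet E) (k : ℝ)
    (hmass : gaussianReal 0 v E = gaussianReal 0 v (Ici k)) :
    gaussianReal a v E ≤ gaussianReal 1 v (Ici k) := by
  rcases le_or_gt 0 a with h0 | h0
  · calc gaussianReal a v E ≤ gaussianReal a v (Ici k) := exchange_Ici hv h0 hE k hmass
      _ = gaussianReal 0 v (Ici (k - a)) := meas_Ici a k
      _ ≤ gaussianReal 0 v (Ici (k - 1)) := mono_Ici 0 (by linarith [ha.2])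
      _ = gaussianReal 1 v (Ici k) := (meas_Ici 1 k).symm
  · have hmass' : gaussianReal 0 v E = gaussianReal 0 v (Iic (-k)) := by
      rw [hmass, refl_Ici]
    calc gaussianReal a v E ≤ gaussianReal a v (Iic (-k)) := exchange_Iic hv h0.le hE _ hmass'
      _ = gaussianReal 0 v (Iic (-k - a)) := meas_Iic a (-k)
      _ = gaussianReal 0 v (Ici (k + a)) := by rw [refl_Ici (k + a)]; ring_nf
      _ ≤ gaussianReal 0 v (Ici (k - 1)) := mono_Ici 0 (by linarith [ha.1])
      _ = gaussianReal 1 v (Ici k) := (meas_Ici 1 k).symm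

/-- Core Neyman–Pearson bound, lower-ray version. -/
lemma core_Iic (hv : v ≠ 0) {a : ℝ} (ha : a ∈ Icc (-1 : ℝ) 1) {E : Set ℝ}
    (hE : MeasurableSet E) (k : ℝ)
    (hmass : gaussianReal 0 v E = gaussianReal 0 v (Iic k)) :
    gaussianReal a v E ≤ gaussianReal (-1) v (Iic k) := by
  rcases le_or_gt a 0 with h0 | h0
  · calc gaussianReal a v E ≤ gaussianReal a v (Iic k) := exchange_Iic hv h0 hE k hmass
      _ = gaussianReal 0 v (Iic (k - a)) := meas_Iic a k
      _ ≤ gaussianReal 0 v (Iic (k + 1)) := mono_Iic 0 (by linarith [ha.1])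
      _ = gaussianReal (-1) v (Iic k) := by rw [meas_Iic (-1) k]; ring_nf
  · have hmass' : gaussianReal 0 v E = gaussianReal 0 v (Ici (-k)) := by
      rw [hmass, refl_Ici (-k), neg_neg]
    calc gaussianReal a v E ≤ gaussianReal a v (Ici (-k)) := exchange_Ici hv h0.le hE _ hmass'
      _ = gaussianReal 0 v (Ici (-k - a)) := meas_Ici a (-k)
      _ = gaussianReal 0 v (Iic (k + a)) := by rw [refl_Ici (-k - a)]; ring_nf
      _ ≤ gaussianReal 0 v (Iic (k + 1)) := mono_Iic 0 (by linarith [ha.2])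
      _ = gaussianReal (-1) v (Iic k) := by rw [meas_Iic (-1) k]; ring_nf

/-- Complement version: lower bound for the second Gaussian. -/
lemma core_compl (hv : v ≠ 0) {a : ℝ} (ha : a ∈ Icc (-1 : ℝ) 1) {E : Set ℝ}
    (hE : MeasurableSet E) (k : ℝ)
    (hmass : gaussianReal 0 v E = gaussianReal 0 v (Ici k)) :
    gaussianReal (-1) v (Ici k) ≤ gaussianReal a v E := by
  have hEc : MeasurableSet Eᶜ := hE.compl
  have hmassc : gaussianReal 0 v Eᶜ = gaussianReal 0 v (Iic k) := by
    have h1 : gaussianReal 0 v E + gaussianReal 0 v Eᶜ = 1 := by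
      rw [measure_add_measure_compl hE]; exact measure_univ
    have h2 : gaussianReal 0 v (Ici k) + gaussianReal 0 v (Iio k) = 1 := by
      rw [← measure_union (by simp [Set.disjoint_left]) measurableSet_Iio]
      rw [union_comm, Iio_union_Ici]; exact measure_univ
    rw [Iic_eq_Iio hv]
    have hfin : gaussianReal 0 v E ≠ ∞ := (measure_lt_top _ _).ne
    rw [hmass] at h1
    rw [← h2] at h1
    exact (ENNReal.add_right_inj (by rw [← hmass] at *; exact hfin)).mp h1
  have hcore : gaussianReal a v Eᶜ ≤ gaussianReal (-1) v (Iic k) := core_Iic hv ha hEc k hmassc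
  have h1 : gaussianReal a v E + gaussianReal a v Eᶜ = 1 := by
    rw [measure_add_measure_compl hE]; exact measure_univ
  have h2 : gaussianReal (-1) v (Ici k) + gaussianReal (-1) v (Iic k) = 1 := by
    rw [Iic_eq_Iio hv, ← measure_union (by simp [Set.disjoint_left]) measurableSet_Iio,
      union_comm _ _, Iio_union_Ici]
    exact measure_univ
  by_contra hlt
  push_neg at hlt
  have hsum : gaussianReal a v E + gaussianReal a v Eᶜ <
      gaussianReal (-1) v (Ici k) + gaussianReal (-1) v (Iic k) :=
    ENNReal.add_lt_add_of_lt_of_le ((measure_lt_top _ _).ne) hlt hcore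
  rw [h1, h2] at hsum
  exact lt_irrefl _ hsum

/-- The pdf is bounded by the normalization constant. -/
lemma pdf_le (hv : v ≠ 0) (m : ℝ) (x : ℝ) :
    gaussianPDFReal m v x ≤ (Real.sqrt (2 * Real.pi * v))⁻¹ := by
  have hv' : (0:ℝ) < (v:ℝ) := lt_of_le_of_ne v.2 (by exact_mod_cast (Ne.symm hv))
  unfold gaussianPDFReal
  have h1 : Real.exp (-(x - m) ^ 2 / (2 * v)) ≤ 1 := by
    apply Real.exp_le_one_iff.mpr
    apply div_nonpos_of_nonpos_of_nonneg (by nlinarith [sq_nonneg (x - m)]) (by linarith)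
  have hC0 : (0:ℝ) ≤ (Real.sqrt (2 * Real.pi * v))⁻¹ := by positivity
  calc (Real.sqrt (2 * Real.pi * v))⁻¹ * Real.exp (-(x - m) ^ 2 / (2 * v))
      ≤ (Real.sqrt (2 * Real.pi * v))⁻¹ * 1 := mul_le_mul_of_nonneg_left h1 hC0
    _ = (Real.sqrt (2 * Real.pi * v))⁻¹ := mul_one _

lemma meas_Ico_le (hv : v ≠ 0) {x y : ℝ} (h : x ≤ y) :
    gaussianReal 0 v (Ico x y) ≤ ENNReal.ofReal ((Real.sqrt (2 * Real.pi * v))⁻¹ * (y - x)) := by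
  rw [gaussianReal_apply _ hv]
  calc ∫⁻ z in Ico x y, gaussianPDF 0 v z
      ≤ ∫⁻ _ in Ico x y, ENNReal.ofReal ((Real.sqrt (2 * Real.pi * v))⁻¹) := by
        refine setLIntegral_mono measurable_const (fun z _ => ?_)
        exact ENNReal.ofReal_le_ofReal (pdf_le hv 0 z)
    _ = ENNReal.ofReal ((Real.sqrt (2 * Real.pi * v))⁻¹) * volume (Ico x y) := by
        rw [setLIntegral_const]
    _ = ENNReal.ofReal ((Real.sqrt (2 * Real.pi * v))⁻¹ * (y - x)) := by
        rw [Real.volume_Ico, ENNReal.ofReal_mul (by positivity)]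

/-- The survival function of the centered Gaussian is continuous. -/
lemma continuous_surv (hv : v ≠ 0) :
    Continuous (fun k => (gaussianReal 0 v (Ici k)).toReal) := by
  have hv' : (0:ℝ) < (v:ℝ) := lt_of_le_of_ne v.2 (by exact_mod_cast (Ne.symm hv))
  set C : ℝ := (Real.sqrt (2 * Real.pi * v))⁻¹ with hC
  have hC' : 0 < C := by rw [hC]; positivity
  have key : ∀ x y : ℝ, x ≤ y →
      0 ≤ (gaussianReal 0 v (Ici x)).toReal - (gaussianReal 0 v (Ici y)).toReal ∧
      (gaussianReal 0 v (Ici x)).toReal - (gaussianReal 0 v (Ici y)).toReal ≤ C * (y - x) := by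
    intro x y hxy
    have hdisj : Disjoint (Ico x y) (Ici y) := by
      rw [Set.disjoint_left]; rintro z ⟨_, hz2⟩ hz3; exact absurd hz3 (not_le.mpr hz2)
    have hsplit : gaussianReal 0 v (Ico x y) + gaussianReal 0 v (Ici y)
        = gaussianReal 0 v (Ici x) := by
      rw [← measure_union hdisj measurableSet_Ici, Ico_union_Ici_eq_Ici hxy]
    have hfin2 : gaussianReal 0 v (Ici y) ≠ ∞ := (measure_lt_top _ _).ne
    have hfin3 : gaussianReal 0 v (Ico x y) ≠ ∞ := (measure_lt_top _ _).ne
    have htr : (gaussianReal 0 v (Ici x)).toReal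
        = (gaussianReal 0 v (Ico x y)).toReal + (gaussianReal 0 v (Ici y)).toReal := by
      rw [← hsplit, ENNReal.toReal_add hfin3 hfin2]
    have h2 : (gaussianReal 0 v (Ico x y)).toReal ≤ C * (y - x) := by
      calc (gaussianReal 0 v (Ico x y)).toReal
          ≤ (ENNReal.ofReal (C * (y - x))).toReal :=
            ENNReal.toReal_mono ENNReal.ofReal_ne_top (meas_Ico_le hv hxy)
        _ = C * (y - x) := ENNReal.toReal_ofReal (by nlinarith)
    exact ⟨by rw [htr]; simp [ENNReal.toReal_nonneg], by rw [htr]; linarith⟩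
  rw [Metric.continuous_iff]
  intro k ε hε
  refine ⟨ε / C, by positivity, fun x hx => ?_⟩
  rw [Real.dist_eq] at hx ⊢
  have habs : |x - k| * C < ε := by
    rw [← lt_div_iff₀ hC']; exact hx
  rcases le_total x k with h | h
  · obtain ⟨hk1, hk2⟩ := key x k h
    rw [abs_of_nonneg hk1]
    have : C * (k - x) ≤ |x - k| * C := by
      rw [abs_sub_comm, abs_of_nonneg (by linarith)]; ring_nf; rfl
    linarith
  · obtain ⟨hk1, hk2⟩ := key k x h
    rw [abs_sub_comm, abs_of_nonneg hk1]
    have : C * (x - k) ≤ |x - k| * C := by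
      rw [abs_of_nonneg (by linarith)]; ring_nf; rfl
    linarith

/-- Existence of an upper ray with prescribed mass. -/
lemma exists_ray (hv : v ≠ 0) {t : ℝ≥0∞} (h0 : t ≠ 0) (h1 : t < 1) :
    ∃ k : ℝ, gaussianReal 0 v (Ici k) = t := by
  set μ0 := gaussianReal 0 v with hμ0
  have htne : t ≠ ∞ := (h1.trans_le le_top).ne
  have hInter : (⋂ n : ℕ, Ici (n:ℝ)) = (∅ : Set ℝ) := by
    ext x; simp only [mem_iInter, mem_Ici, mem_empty_iff_false, iff_false, not_forall, not_le]
    obtain ⟨n, hn⟩ := exists_nat_gt x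
    exact ⟨n, hn⟩
  have hA : Tendsto (fun n : ℕ => μ0 (Ici (n:ℝ))) atTop (𝓝 0) := by
    have := tendsto_measure_iInter_atTop (μ := μ0) (s := fun n : ℕ => Ici (n:ℝ))
      (fun n => measurableSet_Ici.nullMeasurableSet)
      (fun i j hij => Ici_subset_Ici.mpr (by exact_mod_cast hij))
      ⟨0, (measure_lt_top _ _).ne⟩
    rwa [hInter, measure_empty] at this
  obtain ⟨n₁, hn₁⟩ := (hA.eventually_lt_const (zero_lt_iff.mpr h0)).exists
  have hUnion : (⋃ n : ℕ, Ici (-(n:ℝ))) = (univ : Set ℝ) := by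
    ext x; simp only [mem_iUnion, mem_Ici, mem_univ, iff_true]
    obtain ⟨n, hn⟩ := exists_nat_gt (-x)
    exact ⟨n, by linarith⟩
  have hB : Tendsto (fun n : ℕ => μ0 (Ici (-(n:ℝ)))) atTop (𝓝 1) := by
    have := tendsto_measure_iUnion_atTop (μ := μ0) (s := fun n : ℕ => Ici (-(n:ℝ)))
      (fun i j hij => Ici_subset_Ici.mpr (by simp; exact_mod_cast hij))
    rwa [hUnion, measure_univ] at this
  obtain ⟨n₂, hn₂⟩ := (hB.eventually_const_lt h1).exists
  have hle : (-(n₂:ℝ)) ≤ (n₁:ℝ) := by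
    have h1' : (0:ℝ) ≤ n₁ := Nat.cast_nonneg n₁
    have h2' : (0:ℝ) ≤ n₂ := Nat.cast_nonneg n₂
    linarith
  have hcont : ContinuousOn (fun k => (μ0 (Ici k)).toReal) (Icc (-(n₂:ℝ)) (n₁:ℝ)) :=
    (continuous_surv hv).continuousOn
  have hmem : t.toReal ∈ Icc ((μ0 (Ici (n₁:ℝ))).toReal) ((μ0 (Ici (-(n₂:ℝ)))).toReal) := by
    constructor
    · exact le_of_lt (ENNReal.toReal_lt_toReal (measure_lt_top _ _).ne htne |>.mpr hn₁)
    · exact le_of_lt (ENNReal.toReal_lt_toReal htne (measure_lt_top _ _).ne |>.mpr hn₂)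
  obtain ⟨k, _, hk⟩ := intermediate_value_Icc' hle hcont hmem
  refine ⟨k, ?_⟩
  have : (μ0 (Ici k)).toReal = t.toReal := hk
  exact (ENNReal.toReal_eq_toReal_iff' (measure_lt_top _ _).ne htne).mp this

lemma mix_apply_toReal {γ : ℝ} (hγ0 : 0 ≤ γ) (hγ1 : γ ≤ 1) (b : ℝ) (E : Set ℝ) :
    (((ENNReal.ofReal (1 - γ) • gaussianReal 0 v + ENNReal.ofReal γ • gaussianReal b v)) E).toReal
      = (1 - γ) * (gaussianReal 0 v E).toReal + γ * (gaussianReal b v E).toReal := by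
  rw [Measure.add_apply, Measure.smul_apply, Measure.smul_apply, smul_eq_mul, smul_eq_mul]
  rw [ENNReal.toReal_add, ENNReal.toReal_mul, ENNReal.toReal_mul,
    ENNReal.toReal_ofReal (by linarith), ENNReal.toReal_ofReal hγ0]
  · exact ENNReal.mul_ne_top ENNReal.ofReal_ne_top (measure_lt_top _ _).ne
  · exact ENNReal.mul_ne_top ENNReal.ofReal_ne_top (measure_lt_top _ _).ne

/-- The per-set comparison: every set's hockey-stick value for `(a,a')` is dominated by
some set's value for `(1,-1)`. -/
lemma per_set (hv : v ≠ 0) {γ α a a' : ℝ} (hγ0 : 0 ≤ γ) (hγ1 : γ ≤ 1) (hα : 0 ≤ α)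
    (ha : a ∈ Icc (-1 : ℝ) 1) (ha' : a' ∈ Icc (-1 : ℝ) 1)
    {E : Set ℝ} (hE : MeasurableSet E) :
    ∃ E' : Set ℝ, MeasurableSet E' ∧
      (((ENNReal.ofReal (1 - γ) • gaussianReal 0 v + ENNReal.ofReal γ • gaussianReal a v)) E).toReal
        - α * (((ENNReal.ofReal (1 - γ) • gaussianReal 0 v
            + ENNReal.ofReal γ • gaussianReal a' v)) E).toReal
      ≤ (((ENNReal.ofReal (1 - γ) • gaussianReal 0 v
            + ENNReal.ofReal γ • gaussianReal 1 v)) E').toReal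
        - α * (((ENNReal.ofReal (1 - γ) • gaussianReal 0 v
            + ENNReal.ofReal γ • gaussianReal (-1) v)) E').toReal := by
  by_cases h0 : gaussianReal 0 v E = 0
  · have hvol : volume E = 0 := gaussianReal_absolutelyContinuous' 0 hv h0
    have hz : ∀ b : ℝ, gaussianReal b v E = 0 :=
      fun b => gaussianReal_absolutelyContinuous b hv hvol
    refine ⟨∅, MeasurableSet.empty, ?_⟩
    rw [mix_apply_toReal hγ0 hγ1, mix_apply_toReal hγ0 hγ1,
      mix_apply_toReal hγ0 hγ1, mix_apply_toReal hγ0 hγ1]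
    simp [hz a, hz a', h0]
  by_cases h1 : gaussianReal 0 v E = 1
  · have hcompl : gaussianReal 0 v Eᶜ = 0 := by
      have := measure_compl (μ := gaussianReal 0 v) hE (measure_lt_top _ _).ne
      rw [h1, measure_univ, tsub_self] at this
      exact this
    have hvol : volume Eᶜ = 0 := gaussianReal_absolutelyContinuous' 0 hv hcompl
    have hz : ∀ b : ℝ, gaussianReal b v E = 1 := by
      intro b
      have hc : gaussianReal b v Eᶜ = 0 := gaussianReal_absolutelyContinuous b hv hvol
      have := measure_add_measure_compl (μ := gaussianReal b v) hE
      rw [hc, add_zero, measure_univ] at this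
      exact this
    refine ⟨univ, MeasurableSet.univ, ?_⟩
    rw [mix_apply_toReal hγ0 hγ1, mix_apply_toReal hγ0 hγ1,
      mix_apply_toReal hγ0 hγ1, mix_apply_toReal hγ0 hγ1]
    simp [hz a, hz a', h1, measure_univ]
  · have hle1 : gaussianReal 0 v E ≤ 1 := by
      have := measure_mono (subset_univ E) (μ := gaussianReal 0 v)
      rwa [measure_univ] at this
    have hlt : gaussianReal 0 v E < 1 := lt_of_le_of_ne hle1 h1
    obtain ⟨k, hk⟩ := exists_ray hv h0 hlt
    have hmass : gaussianReal 0 v E = gaussianReal 0 v (Ici k) := hk.symm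
    refine ⟨Ici k, measurableSet_Ici, ?_⟩
    have hA : gaussianReal a v E ≤ gaussianReal 1 v (Ici k) := core_Ici hv ha hE k hmass
    have hB : gaussianReal (-1) v (Ici k) ≤ gaussianReal a' v E := core_compl hv ha' hE k hmass
    have hAr : (gaussianReal a v E).toReal ≤ (gaussianReal 1 v (Ici k)).toReal :=
      ENNReal.toReal_mono (measure_lt_top _ _).ne hA
    have hBr : (gaussianReal (-1) v (Ici k)).toReal ≤ (gaussianReal a' v E).toReal :=
      ENNReal.toReal_mono (measure_lt_top _ _).ne hB
    have h0r : (gaussianReal 0 v E).toReal = (gaussianReal 0 v (Ici k)).toReal := by rw [hmass]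
    rw [mix_apply_toReal hγ0 hγ1, mix_apply_toReal hγ0 hγ1,
      mix_apply_toReal hγ0 hγ1, mix_apply_toReal hγ0 hγ1, h0r]
    have t1 : γ * (gaussianReal a v E).toReal ≤ γ * (gaussianReal 1 v (Ici k)).toReal :=
      mul_le_mul_of_nonneg_left hAr hγ0
    have t2 : (α * γ) * (gaussianReal (-1) v (Ici k)).toReal
        ≤ (α * γ) * (gaussianReal a' v E).toReal :=
      mul_le_mul_of_nonneg_left hBr (by positivity)
    nlinarith [t1, t2]

end HsAux

/-- Extremality of the endpoints for subsampled Gaussian mixtures: for `a, a' ∈ [−1,1]`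
and all `α ≥ 0`,
`H_α((1−γ)N(0,σ²) + γN(a,σ²) ‖ (1−γ)N(0,σ²) + γN(a',σ²))
  ≤ H_α((1−γ)N(0,σ²) + γN(1,σ²) ‖ (1−γ)N(0,σ²) + γN(−1,σ²))`. -/
theorem hsDiv_gaussMixture_extremal (σ γ : ℝ) (hσ : 0 < σ) (hγ0 : 0 ≤ γ) (hγ1 : γ ≤ 1)
    (a a' : ℝ) (ha : a ∈ Set.Icc (-1 : ℝ) 1) (ha' : a' ∈ Set.Icc (-1 : ℝ) 1)
    (α : ℝ) (hα : 0 ≤ α) :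
    hsDiv α
      (ENNReal.ofReal (1 - γ) • gaussianReal 0 ⟨σ ^ 2, sq_nonneg σ⟩ +
        ENNReal.ofReal γ • gaussianReal a ⟨σ ^ 2, sq_nonneg σ⟩)
      (ENNReal.ofReal (1 - γ) • gaussianReal 0 ⟨σ ^ 2, sq_nonneg σ⟩ +
        ENNReal.ofReal γ • gaussianReal a' ⟨σ ^ 2, sq_nonneg σ⟩) ≤
    hsDiv α
      (ENNReal.ofReal (1 - γ) • gaussianReal 0 ⟨σ ^ 2, sq_nonneg σ⟩ +
        ENNReal.ofReal γ • gaussianReal 1 ⟨σ ^ 2, sq_nonneg σ⟩)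
      (ENNReal.ofReal (1 - γ) • gaussianReal 0 ⟨σ ^ 2, sq_nonneg σ⟩ +
        ENNReal.ofReal γ • gaussianReal (-1) ⟨σ ^ 2, sq_nonneg σ⟩) := by
  set v : ℝ≥0 := ⟨σ ^ 2, sq_nonneg σ⟩ with hvdef
  have hv : v ≠ 0 := by
    intro h
    have : σ ^ 2 = 0 := congrArg NNReal.toReal h
    nlinarith
  set P1 : Measure ℝ :=
    ENNReal.ofReal (1 - γ) • gaussianReal 0 v + ENNReal.ofReal γ • gaussianReal 1 v with hP1
  set Q1 : Measure ℝ :=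
    ENNReal.ofReal (1 - γ) • gaussianReal 0 v + ENNReal.ofReal γ • gaussianReal (-1) v with hQ1
  have hP1top : P1 Set.univ ≠ ⊤ := by
    rw [hP1, Measure.add_apply, Measure.smul_apply, Measure.smul_apply, smul_eq_mul, smul_eq_mul,
      measure_univ, measure_univ, mul_one, mul_one]
    exact ENNReal.add_ne_top.mpr ⟨ENNReal.ofReal_ne_top, ENNReal.ofReal_ne_top⟩
  have hbdd : BddAbove (Set.range fun E' : {E : Set ℝ // MeasurableSet E} =>
      ((P1 E').toReal - α * ((Q1 E').toReal))) := by
    refine ⟨(P1 Set.univ).toReal, ?_⟩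
    rintro x ⟨⟨F, hF⟩, rfl⟩
    have h1 : (P1 F).toReal ≤ (P1 Set.univ).toReal :=
      ENNReal.toReal_mono hP1top (measure_mono (Set.subset_univ F))
    have h2 : 0 ≤ α * (Q1 F).toReal := by positivity
    simp only
    linarith
  unfold hsDiv
  apply ciSup_le
  rintro ⟨E, hE⟩
  obtain ⟨E', hE', hle⟩ := HsAux.per_set hv hγ0 hγ1 hα ha ha' hE
  exact hle.trans (le_ciSup hbdd ⟨E', hE'⟩)
end
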